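/- arXiv:2305.16232 — 6 statements merged into one kernel-verified Lean document; each statement's English description precedes it below -/
import Mathlib

section
/- Let f ∈ Bound(k,n) and for each i ∈ ℤ let L_i ⊂ ℝ² be the closed line segment from (i,1) to (f(i),0). Then for all integers 1 ≤ i < j ≤ n, one has (L_i ∪ L_{i+n}) ∩ L_j ≠ ∅ if and only if f(i) > f(j) or f(i) < f(j) − n. Consequently the number of pairs (i,j) with 1 ≤ i < j ≤ n and (L_i ∪ L_{i+n}) ∩ L_j ≠ ∅ (the affine inversions of f) equals ℓ(f). -/
/-- A `k`-bounded affine permutation of size `n`: a bijection `f : ℤ → ℤ` with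
`f(i+n) = f(i) + n`, `i ≤ f(i) ≤ i + n` for all `i`, and `∑_{i=1}^n (f(i) - i) = n*k`. -/
structure BoundedAffinePerm (k n : ℕ) where
  toFun : ℤ → ℤ
  bijective : Function.Bijective toFun
  periodic : ∀ i : ℤ, toFun (i + (n : ℤ)) = toFun i + (n : ℤ)
  le_apply : ∀ i : ℤ, i ≤ toFun i
  apply_le : ∀ i : ℤ, toFun i ≤ i + (n : ℤ)
  sum_eq : (∑ i ∈ Finset.Icc (1 : ℤ) (n : ℤ), (toFun i - i)) = (n : ℤ) * (k : ℤ)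

namespace BoundedAffinePerm

variable {k n : ℕ}

/-- The length of a bounded affine permutation: the number of pairs `(i,j)` with
`1 ≤ i < j ≤ n` and either `f(i) > f(j)` or `f(i) < f(j) - n` (affine inversions). -/
noncomputable def length (f : BoundedAffinePerm k n) : ℕ :=
  ((Finset.Icc (1 : ℤ) (n : ℤ) ×ˢ Finset.Icc (1 : ℤ) (n : ℤ)).filter
    (fun p => p.1 < p.2 ∧
      (f.toFun p.2 < f.toFun p.1 ∨ f.toFun p.1 < f.toFun p.2 - (n : ℤ)))).card

/-- The number of fixed points of `f` in `{1, …, n}`. -/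
noncomputable def fixCount (f : BoundedAffinePerm k n) : ℕ :=
  ((Finset.Icc (1 : ℤ) (n : ℤ)).filter (fun i => f.toFun i = i)).card

/-- The crossing number of `f`: the number of pairs `(i,j) ∈ {1,…,n} × ℤ` with
`i < j`, `j < f(i)` and `f(i) < f(j)`. -/
noncomputable def crossings (f : BoundedAffinePerm k n) : ℕ :=
  ∑ i ∈ Finset.Icc (1 : ℤ) (n : ℤ),
    ((Finset.Ioo i (f.toFun i)).filter (fun j => f.toFun i < f.toFun j)).card

end BoundedAffinePerm

/-- The transposition `σ_i` of size `n`. -/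
def sigmaT (n : ℕ) (i : ℤ) : ℤ → ℤ := fun m =>
  if m % (n : ℤ) = i % (n : ℤ) then m + 1
  else if m % (n : ℤ) = (i + 1) % (n : ℤ) then m - 1
  else m

/-- The covering relation `f ⋖ g` on `Bound(k,n)`: `ℓ(g) > ℓ(f)` and `g = σ_i ∘ f`
or `g = f ∘ σ_i` for some transposition `σ_i` of size `n`. -/
def BoundedAffinePerm.Covers {k n : ℕ} (f g : BoundedAffinePerm k n) : Prop :=
  f.length < g.length ∧
    ∃ i : ℤ, g.toFun = sigmaT n i ∘ f.toFun ∨ g.toFun = f.toFun ∘ sigmaT n i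


lemma seg_inter_of {a b c d : ℝ} (h1 : a ≤ c) (h2 : d ≤ b) :
    (segment ℝ ((a,(1:ℝ)) : ℝ × ℝ) (b,0) ∩ segment ℝ ((c,1) : ℝ × ℝ) (d,0)).Nonempty := by
  rcases eq_or_lt_of_le (show (0:ℝ) ≤ (c-a)+(b-d) by linarith) with hD | hD
  · have hac : a = c := by linarith
    exact ⟨(a,1), left_mem_segment _ _ _, by rw [hac]; exact left_mem_segment _ _ _⟩
  · set D := (c-a)+(b-d) with hDdef
    have hu0 : 0 ≤ (b-d)/D := div_nonneg (by linarith) hD.le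
    have hv0 : 0 ≤ (c-a)/D := div_nonneg (by linarith) hD.le
    have hsum : (b-d)/D + (c-a)/D = 1 := by field_simp; ring
    refine ⟨((b-d)/D*a + (c-a)/D*b, (b-d)/D),
      ⟨(b-d)/D, (c-a)/D, hu0, hv0, hsum, ?_⟩,
      ⟨(b-d)/D, (c-a)/D, hu0, hv0, hsum, ?_⟩⟩
    · simp only [Prod.smul_mk, Prod.mk_add_mk, Prod.mk.injEq, smul_eq_mul]
      exact ⟨trivial, by ring⟩
    · simp only [Prod.smul_mk, Prod.mk_add_mk, Prod.mk.injEq, smul_eq_mul]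
      constructor
      · field_simp
        ring
      · ring

lemma seg_inter_nonneg {a b c d : ℝ}
    (h : (segment ℝ ((a,(1:ℝ)) : ℝ × ℝ) (b,0) ∩ segment ℝ ((c,1) : ℝ × ℝ) (d,0)).Nonempty) :
    (a-c)*(b-d) ≤ 0 := by
  obtain ⟨p, hp1, hp2⟩ := h
  obtain ⟨u, v, hu, hv, huv, he⟩ := hp1
  obtain ⟨u', v', hu', hv', huv', he'⟩ := hp2
  have e2 : u * 1 + v * 0 = p.2 := congrArg Prod.snd he
  have e2' : u' * 1 + v' * 0 = p.2 := congrArg Prod.snd he'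
  have e1 : u * a + v * b = p.1 := congrArg Prod.fst he
  have e1' : u' * c + v' * d = p.1 := congrArg Prod.fst he'
  have huu : u = u' := by linarith
  have hvv : v = v' := by linarith
  subst huu; subst hvv
  have E : u*(a-c) + v*(b-d) = 0 := by linear_combination e1 - e1'
  have key : (a-c)*(b-d) = -(u*(a-c)^2) - v*(b-d)^2 := by
    linear_combination ((a-c)+(b-d))*E - (a-c)*(b-d)*huv
  nlinarith [mul_nonneg hu (sq_nonneg (a-c)), mul_nonneg hv (sq_nonneg (b-d))]

lemma seg_iff (a b c d : ℝ) :
    (segment ℝ ((a,(1:ℝ)) : ℝ × ℝ) (b,0) ∩ segment ℝ ((c,1) : ℝ × ℝ) (d,0)).Nonempty ↔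
      (a-c)*(b-d) ≤ 0 := by
  constructor
  · exact seg_inter_nonneg
  · intro h
    have : (a ≤ c ∧ d ≤ b) ∨ (c ≤ a ∧ b ≤ d) := by
      by_contra hc
      push_neg at hc
      obtain ⟨h1, h2⟩ := hc
      rcases le_or_gt a c with h3 | h3
      · have h4 := h1 h3
        rcases le_or_gt c a with h5 | h5
        · have h6 := h2 h5
          nlinarith
        · nlinarith
      · have h6 := h2 h3.le
        nlinarith
    rcases this with ⟨h1, h2⟩ | ⟨h1, h2⟩
    · exact seg_inter_of h1 h2
    · rw [Set.inter_comm]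
      exact seg_inter_of h1 h2

theorem statement1 {k n : ℕ} (f : BoundedAffinePerm k n)
    (L : ℤ → Set (ℝ × ℝ))
    (hL : ∀ i : ℤ, L i = segment ℝ ((i : ℝ), (1 : ℝ)) ((f.toFun i : ℝ), (0 : ℝ))) :
    (∀ i j : ℤ, 1 ≤ i → i < j → j ≤ (n : ℤ) →
      (((L i ∪ L (i + (n : ℤ))) ∩ L j).Nonempty ↔
        (f.toFun j < f.toFun i ∨ f.toFun i < f.toFun j - (n : ℤ)))) ∧
    {p : ℤ × ℤ | 1 ≤ p.1 ∧ p.1 < p.2 ∧ p.2 ≤ (n : ℤ) ∧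
      ((L p.1 ∪ L (p.1 + (n : ℤ))) ∩ L p.2).Nonempty}.ncard = f.length := by
  have hinj := f.bijective.injective
  have main : ∀ i j : ℤ, 1 ≤ i → i < j → j ≤ (n : ℤ) →
      (((L i ∪ L (i + (n : ℤ))) ∩ L j).Nonempty ↔
        (f.toFun j < f.toFun i ∨ f.toFun i < f.toFun j - (n : ℤ))) := by
    intro i j hi hij hj
    rw [hL, hL, hL, Set.union_inter_distrib_right, Set.union_nonempty, seg_iff, seg_iff]
    have hij' : (i:ℝ) < j := by exact_mod_cast hij
    have h1 : ((i:ℝ) - j) * ((f.toFun i:ℝ) - f.toFun j) ≤ 0 ↔ f.toFun j < f.toFun i := by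
      constructor
      · intro h
        have hle : (f.toFun j:ℝ) ≤ f.toFun i := by nlinarith
        have hle' : f.toFun j ≤ f.toFun i := by exact_mod_cast hle
        rcases hle'.lt_or_eq with h' | h'
        · exact h'
        · exact absurd (hinj h') (by omega)
      · intro h
        have : (f.toFun j:ℝ) < f.toFun i := by exact_mod_cast h
        nlinarith
    have hper := f.periodic i
    have hji' : (j:ℝ) < ((i + (n:ℤ) : ℤ) : ℝ) := by
      have : j < i + (n:ℤ) := by omega
      exact_mod_cast this
    have h2 : (((i + (n:ℤ) : ℤ):ℝ) - j) * ((f.toFun (i + (n:ℤ)):ℝ) - f.toFun j) ≤ 0 ↔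
        f.toFun i < f.toFun j - (n:ℤ) := by
      constructor
      · intro h
        have hle : (f.toFun (i + (n:ℤ)):ℝ) ≤ f.toFun j := by nlinarith
        have hle' : f.toFun (i + (n:ℤ)) ≤ f.toFun j := by exact_mod_cast hle
        rcases hle'.lt_or_eq with h' | h'
        · omega
        · exact absurd (hinj h') (by omega)
      · intro h
        have h' : f.toFun (i + (n:ℤ)) < f.toFun j := by omega
        have : (f.toFun (i + (n:ℤ)):ℝ) < f.toFun j := by exact_mod_cast h'
        nlinarith
    rw [h1, h2]
  refine ⟨main, ?_⟩
  have hset : {p : ℤ × ℤ | 1 ≤ p.1 ∧ p.1 < p.2 ∧ p.2 ≤ (n : ℤ) ∧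
      ((L p.1 ∪ L (p.1 + (n : ℤ))) ∩ L p.2).Nonempty} =
      ↑((Finset.Icc (1 : ℤ) (n : ℤ) ×ˢ Finset.Icc (1 : ℤ) (n : ℤ)).filter
        (fun p => p.1 < p.2 ∧
          (f.toFun p.2 < f.toFun p.1 ∨ f.toFun p.1 < f.toFun p.2 - (n : ℤ)))) := by
    ext ⟨i, j⟩
    simp only [Set.mem_setOf_eq, Finset.coe_filter, Finset.mem_product, Finset.mem_Icc]
    constructor
    · rintro ⟨h1, h2, h3, h4⟩
      exact ⟨⟨⟨h1, by omega⟩, ⟨by omega, h3⟩⟩, h2, (main i j h1 h2 h3).mp h4⟩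
    · rintro ⟨⟨⟨ha, hb⟩, hc, hd⟩, h2, h3⟩
      exact ⟨ha, h2, hd, (main i j ha h2 hd).mpr h3⟩
  rw [hset, Set.ncard_coe_finset]
  rfl
end

section
/- Let f ∈ Bound(k,n). Then for every m ∈ ℤ, the set {i ∈ ℤ : i ≤ m < f(i)} is finite and has exactly k elements. -/
open Finset in
private noncomputable def FmSet {k n : ℕ} (f : BoundedAffinePerm k n) (m : ℤ) : Finset ℤ :=
  (Finset.Icc (m - (n : ℤ) + 1) m).filter (fun i => m < f.toFun i)

open Finset in
private lemma Fm_step {k n : ℕ} (hpos : 0 < n) (f : BoundedAffinePerm k n) (m : ℤ) :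
    (FmSet f (m + 1)).card = (FmSet f m).card := by
  by_cases h : f.toFun (m + 1) = m + 1
  · congr 1
    ext i
    simp only [FmSet, mem_filter, mem_Icc]
    constructor
    · rintro ⟨⟨h1, h2⟩, h3⟩
      have hi : i ≠ m + 1 := by rintro rfl; omega
      have hb := f.apply_le i
      exact ⟨⟨by omega, by omega⟩, by omega⟩
    · rintro ⟨⟨h1, h2⟩, h3⟩
      have hne : f.toFun i ≠ m + 1 := fun he => by
        have : i = m + 1 := f.bijective.injective (he.trans h.symm)
        omega
      have hb := f.apply_le i
      exact ⟨⟨by omega, by omega⟩, by omega⟩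
  · obtain ⟨i0, hi0⟩ := f.bijective.surjective (m + 1)
    have hle := f.le_apply i0
    have hle2 := f.apply_le i0
    have hlem := f.le_apply (m + 1)
    have hi0ne : i0 ≠ m + 1 := fun he => h (by rw [← he, hi0, he])
    have hset : FmSet f (m + 1) = insert (m + 1) ((FmSet f m).erase i0) := by
      ext i
      simp only [FmSet, mem_insert, mem_erase, mem_filter, mem_Icc]
      constructor
      · rintro ⟨⟨h1, h2⟩, h3⟩
        by_cases hi : i = m + 1
        · exact Or.inl hi
        · have hne : i ≠ i0 := fun he => by rw [he, hi0] at h3; omega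
          exact Or.inr ⟨hne, ⟨by omega, by omega⟩, by omega⟩
      · rintro (rfl | ⟨hne, ⟨h1, h2⟩, h3⟩)
        · exact ⟨⟨by omega, by omega⟩, by omega⟩
        · have hfne : f.toFun i ≠ m + 1 := fun he =>
            hne (f.bijective.injective (he.trans hi0.symm))
          have hb := f.apply_le i
          exact ⟨⟨by omega, by omega⟩, by omega⟩
    have hmem : i0 ∈ FmSet f m := by
      simp only [FmSet, mem_filter, mem_Icc]
      omega
    have hnm : (m + 1) ∉ (FmSet f m).erase i0 := by
      simp only [FmSet, mem_erase, mem_filter, mem_Icc]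
      omega
    have hpos' : 0 < (FmSet f m).card := Finset.card_pos.mpr ⟨i0, hmem⟩
    rw [hset, Finset.card_insert_of_notMem hnm, Finset.card_erase_of_mem hmem]
    omega

private lemma Fm_const {k n : ℕ} (hpos : 0 < n) (f : BoundedAffinePerm k n) (m : ℤ) :
    (FmSet f m).card = (FmSet f 0).card := by
  induction m using Int.induction_on with
  | zero => rfl
  | succ j ih => rw [Fm_step hpos f (j : ℤ), ih]
  | pred j ih =>
    have hs := Fm_step hpos f (-(j : ℤ) - 1)
    have he : (-(j : ℤ) - 1 + 1) = -(j : ℤ) := by ring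
    rw [he] at hs
    rw [← hs]
    exact ih

open Finset in
private lemma Fm_sum {k n : ℕ} (hpos : 0 < n) (f : BoundedAffinePerm k n) :
    (∑ m ∈ Finset.Icc (1 : ℤ) (n : ℤ), ((FmSet f m).card : ℤ)) = (n : ℤ) * (k : ℤ) := by
  have per : ∀ i : ℤ, f.toFun (i - (n : ℤ)) = f.toFun i - (n : ℤ) := by
    intro i
    have hp := f.periodic (i - (n : ℤ))
    have he : i - (n : ℤ) + (n : ℤ) = i := by ring
    rw [he] at hp
    omega
  set A : ℤ → ℤ := fun i =>
    ∑ m ∈ Finset.Icc (1 : ℤ) (n : ℤ), (if i ≤ m ∧ m < f.toFun i then (1 : ℤ) else 0) with hA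
  have key : ∀ m ∈ Finset.Icc (1 : ℤ) (n : ℤ),
      ((FmSet f m).card : ℤ) =
      ∑ i ∈ Finset.Icc (1 - (n : ℤ)) (n : ℤ),
        (if i ≤ m ∧ m < f.toFun i then (1 : ℤ) else 0) := by
    intro m hm
    rw [mem_Icc] at hm
    have hfe : FmSet f m =
        (Finset.Icc (1 - (n : ℤ)) (n : ℤ)).filter (fun i => i ≤ m ∧ m < f.toFun i) := by
      ext i
      simp only [FmSet, mem_filter, mem_Icc]
      have hb := f.apply_le i
      constructor <;> intro h' <;> omega
    rw [Finset.sum_boole, hfe]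
  rw [Finset.sum_congr rfl key, Finset.sum_comm]
  have hsplit : Finset.Icc (1 - (n : ℤ)) (n : ℤ) =
      Finset.Icc (1 - (n : ℤ)) 0 ∪ Finset.Icc (1 : ℤ) (n : ℤ) := by
    ext x
    simp only [mem_union, mem_Icc]
    omega
  have hdisj : Disjoint (Finset.Icc (1 - (n : ℤ)) 0) (Finset.Icc (1 : ℤ) (n : ℤ)) := by
    rw [Finset.disjoint_left]
    intro a ha hb
    rw [mem_Icc] at ha hb
    omega
  rw [hsplit, Finset.sum_union hdisj]
  have himg : Finset.Icc (1 - (n : ℤ)) 0 =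
      (Finset.Icc (1 : ℤ) (n : ℤ)).image (fun i => i - (n : ℤ)) := by
    ext x
    simp only [mem_image, mem_Icc]
    constructor
    · intro hx
      exact ⟨x + n, by omega, by omega⟩
    · rintro ⟨i, hi, rfl⟩
      omega
  have hreix : ∑ i ∈ Finset.Icc (1 - (n : ℤ)) 0, A i =
      ∑ i ∈ Finset.Icc (1 : ℤ) (n : ℤ), A (i - (n : ℤ)) := by
    rw [himg, Finset.sum_image]
    intro a _ b _ hab
    simpa using hab
  show (∑ i ∈ Finset.Icc (1 - (n : ℤ)) 0, A i) + (∑ i ∈ Finset.Icc (1 : ℤ) (n : ℤ), A i)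
      = (n : ℤ) * (k : ℤ)
  rw [hreix, ← Finset.sum_add_distrib]
  have point : ∀ i ∈ Finset.Icc (1 : ℤ) (n : ℤ),
      A (i - (n : ℤ)) + A i = f.toFun i - i := by
    intro i hi
    rw [mem_Icc] at hi
    have hb1 := f.le_apply i
    have hb2 := f.apply_le i
    have hA1 : A i = ((Finset.Ico i (min (f.toFun i) ((n : ℤ) + 1))).card : ℤ) := by
      rw [hA]
      simp only
      rw [Finset.sum_boole]
      norm_cast
      congr 1
      ext x
      simp only [mem_filter, mem_Icc, mem_Ico]
      omega
    have hA2 : A (i - (n : ℤ)) = ((Finset.Ico (1 : ℤ) (f.toFun i - (n : ℤ))).card : ℤ) := by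
      rw [hA]
      simp only [per i]
      rw [Finset.sum_boole]
      norm_cast
      congr 1
      ext x
      simp only [mem_filter, mem_Icc, mem_Ico]
      omega
    rw [hA1, hA2, Int.card_Ico, Int.card_Ico]
    omega
  rw [Finset.sum_congr rfl point, f.sum_eq]

theorem statement4 {k n : ℕ} (hn : 0 < n) (f : BoundedAffinePerm k n) (m : ℤ) :
    {i : ℤ | i ≤ m ∧ m < f.toFun i}.Finite ∧
    {i : ℤ | i ≤ m ∧ m < f.toFun i}.ncard = k := by
  have hset : {i : ℤ | i ≤ m ∧ m < f.toFun i} = ↑(FmSet f m) := by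
    ext i
    simp only [Set.mem_setOf_eq, FmSet, Finset.coe_filter, Finset.mem_Icc]
    have hb := f.apply_le i
    constructor <;> intro h' <;> omega
  rw [hset]
  refine ⟨(FmSet f m).finite_toSet, ?_⟩
  rw [Set.ncard_coe_finset]
  have hs := Fm_sum hn f
  have hconst : ∀ x ∈ Finset.Icc (1 : ℤ) (n : ℤ),
      ((FmSet f x).card : ℤ) = ((FmSet f 0).card : ℤ) := by
    intro x _
    rw [Fm_const hn f x]
  rw [Finset.sum_congr rfl hconst, Finset.sum_const, Int.card_Icc] at hs
  have hcard : ((n : ℤ) + 1 - 1).toNat = n := by omega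
  rw [hcard] at hs
  have hsmul : (n : ℤ) * ((FmSet f 0).card : ℤ) = (n : ℤ) * (k : ℤ) := by
    rw [← hs]
    simp [nsmul_eq_mul]
  have h0 : ((FmSet f 0).card : ℤ) = (k : ℤ) := by
    have hne : (n : ℤ) ≠ 0 := by exact_mod_cast hn.ne'
    exact mul_left_cancel₀ hne hsmul
  have hm := Fm_const hn f m
  omega
end

section
/- For every f ∈ Bound(k,n), one has Cr(f) = (k−1)·n + #Fix(f) − ℓ(f), where #Fix(f) is the number of fixed points of f in {1,…,n}. -/
namespace BoundedAffinePerm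

variable {k n : ℕ}

lemma inj (f : BoundedAffinePerm k n) : Function.Injective f.toFun := f.bijective.1

/-- The "nesting" count: pairs `(i,j)` with `i ∈ [1,n]`, `i < j < f(i)`, `f(j) < f(i)`. -/
noncomputable def nestings (f : BoundedAffinePerm k n) : ℕ :=
  ∑ i ∈ Finset.Icc (1 : ℤ) (n : ℤ),
    ((Finset.Ioo i (f.toFun i)).filter (fun j => f.toFun j < f.toFun i)).card

lemma nestings_eq_length (f : BoundedAffinePerm k n) : f.nestings = f.length := by
  unfold nestings length
  rw [← Finset.card_sigma]
  apply Finset.card_bij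
    (fun p _ => if p.2 ≤ (n : ℤ) then (p.1, p.2) else (p.2 - (n : ℤ), p.1))
  · rintro ⟨i, j⟩ hp
    simp only [Finset.mem_sigma, Finset.mem_filter, Finset.mem_Ioo, Finset.mem_Icc] at hp
    obtain ⟨⟨hi1, hi2⟩, ⟨⟨hij, hjf⟩, hfj⟩⟩ := hp
    have hfub : f.toFun i ≤ i + (n : ℤ) := f.apply_le i
    have hjlb : j ≤ f.toFun j := f.le_apply j
    by_cases hjn : j ≤ (n : ℤ)
    · rw [if_pos hjn]
      simp only [Finset.mem_filter, Finset.mem_product, Finset.mem_Icc]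
      exact ⟨⟨⟨hi1, hi2⟩, ⟨by omega, hjn⟩⟩, hij, Or.inl hfj⟩
    · rw [if_neg hjn]
      simp only [Finset.mem_filter, Finset.mem_product, Finset.mem_Icc]
      have hper : f.toFun (j - (n : ℤ)) = f.toFun j - (n : ℤ) := by
        have := f.periodic (j - (n : ℤ)); rw [sub_add_cancel] at this; omega
      refine ⟨⟨⟨by omega, by omega⟩, ⟨hi1, hi2⟩⟩, by omega, Or.inr ?_⟩
      omega
  · rintro ⟨i, j⟩ hp ⟨i', j'⟩ hp' heq
    simp only [Finset.mem_sigma, Finset.mem_filter, Finset.mem_Ioo, Finset.mem_Icc] at hp hp'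
    obtain ⟨⟨hi1, hi2⟩, ⟨⟨hij, hjf⟩, hfj⟩⟩ := hp
    obtain ⟨⟨hi1', hi2'⟩, ⟨⟨hij', hjf'⟩, hfj'⟩⟩ := hp'
    by_cases h1 : j ≤ (n : ℤ) <;> by_cases h2 : j' ≤ (n : ℤ) <;>
      simp only [h1, h2, if_pos, if_neg, ite_true, ite_false, Prod.mk.injEq] at heq
    · exact Sigma.ext heq.1 (by simp [heq.2])
    · exfalso
      have hper : f.toFun (i + (n : ℤ)) = f.toFun i + (n : ℤ) := f.periodic i
      have e1 : i = j' - (n : ℤ) := heq.1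
      have e2 : j = i' := heq.2
      subst e2
      have e3 : f.toFun j' = f.toFun (i + (n : ℤ)) := by
        rw [show j' = i + (n : ℤ) by omega]
      omega
    · exfalso
      have hper : f.toFun (i' + (n : ℤ)) = f.toFun i' + (n : ℤ) := f.periodic i'
      have e1 : j - (n : ℤ) = i' := heq.1
      have e2 : i = j' := heq.2
      subst e2
      have e3 : f.toFun j = f.toFun (i' + (n : ℤ)) := by
        rw [show j = i' + (n : ℤ) by omega]
      omega
    · have e1 : j - (n : ℤ) = j' - (n : ℤ) := heq.1
      have e2 : i = i' := heq.2
      exact Sigma.ext e2 (heq_of_eq (show j = j' by omega))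
  · rintro ⟨a, b⟩ hq
    simp only [Finset.mem_filter, Finset.mem_product, Finset.mem_Icc] at hq
    obtain ⟨⟨⟨ha1, ha2⟩, hb1, hb2⟩, hab, hcond⟩ := hq
    by_cases hc : f.toFun b < f.toFun a
    · refine ⟨⟨a, b⟩, ?_, ?_⟩
      · simp only [Finset.mem_sigma, Finset.mem_filter, Finset.mem_Ioo, Finset.mem_Icc]
        have := f.le_apply b
        exact ⟨⟨ha1, ha2⟩, ⟨hab, by omega⟩, hc⟩
      · simp [hb2]
    · have hc2 : f.toFun a < f.toFun b - (n : ℤ) := by tauto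
      refine ⟨⟨b, a + (n : ℤ)⟩, ?_, ?_⟩
      · simp only [Finset.mem_sigma, Finset.mem_filter, Finset.mem_Ioo, Finset.mem_Icc]
        have hper : f.toFun (a + (n : ℤ)) = f.toFun a + (n : ℤ) := f.periodic a
        have := f.le_apply a
        exact ⟨⟨hb1, hb2⟩, ⟨by omega, by omega⟩, by omega⟩
      · have : ¬ (a + (n : ℤ) ≤ (n : ℤ)) := by omega
        simp [this]

lemma crossings_add_nestings (f : BoundedAffinePerm k n) :
    (f.crossings : ℤ) + (f.nestings : ℤ)
      = (n : ℤ) * (k : ℤ) - (n : ℤ) + (f.fixCount : ℤ) := by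
  unfold crossings nestings
  push_cast
  rw [← Finset.sum_add_distrib]
  have key : ∀ i ∈ Finset.Icc (1 : ℤ) (n : ℤ),
      (((Finset.Ioo i (f.toFun i)).filter (fun j => f.toFun i < f.toFun j)).card : ℤ)
        + (((Finset.Ioo i (f.toFun i)).filter (fun j => f.toFun j < f.toFun i)).card : ℤ)
      = (f.toFun i - i) - 1 + (if f.toFun i = i then 1 else 0) := by
    intro i _
    have hsplit : ((Finset.Ioo i (f.toFun i)).filter (fun j => f.toFun i < f.toFun j)).card
        + ((Finset.Ioo i (f.toFun i)).filter (fun j => ¬ f.toFun i < f.toFun j)).card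
        = (Finset.Ioo i (f.toFun i)).card :=
      Finset.card_filter_add_card_filter_not _
    have hcongr : (Finset.Ioo i (f.toFun i)).filter (fun j => ¬ f.toFun i < f.toFun j)
        = (Finset.Ioo i (f.toFun i)).filter (fun j => f.toFun j < f.toFun i) := by
      apply Finset.filter_congr
      intro j hj
      simp only [Finset.mem_Ioo] at hj
      have hne : f.toFun j ≠ f.toFun i := fun h => (by omega : j ≠ i) (f.inj h)
      simp only [not_lt, eq_iff_iff]
      omega
    rw [hcongr] at hsplit
    have hcard : (Finset.Ioo i (f.toFun i)).card = (f.toFun i - i - 1).toNat :=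
      Int.card_Ioo i (f.toFun i)
    have hle : i ≤ f.toFun i := f.le_apply i
    have : (((Finset.Ioo i (f.toFun i)).card : ℤ))
        = (f.toFun i - i) - 1 + (if f.toFun i = i then 1 else 0) := by
      rw [hcard]
      split <;> omega
    rw [← this, ← hsplit]
    push_cast
    ring
  rw [Finset.sum_congr rfl key]
  rw [Finset.sum_add_distrib, Finset.sum_sub_distrib, f.sum_eq]
  have h1 : ∑ _i ∈ Finset.Icc (1 : ℤ) (n : ℤ), (1 : ℤ) = (n : ℤ) := by
    rw [Finset.sum_const, Int.card_Icc]
    simp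
  have h2 : (∑ i ∈ Finset.Icc (1 : ℤ) (n : ℤ),
      (if f.toFun i = i then (1 : ℤ) else 0)) = (f.fixCount : ℤ) := by
    unfold fixCount
    rw [Finset.card_filter]
    push_cast
    rfl
  rw [h1, h2]

end BoundedAffinePerm

theorem statement5 {k n : ℕ} (f : BoundedAffinePerm k n) :
    (f.crossings : ℤ) = ((k : ℤ) - 1) * (n : ℤ) + (f.fixCount : ℤ) - (f.length : ℤ) := by
  have h1 := f.crossings_add_nestings
  have h2 := f.nestings_eq_length
  have h2' : (f.nestings : ℤ) = (f.length : ℤ) := by exact_mod_cast h2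
  rw [h2'] at h1
  linarith
end

section
/- Let f, g ∈ Bound(k,n) with f ⋖ g. Then exactly one of the following two alternatives holds: (i) Cr(f) = Cr(g) + 1 and #Fix(f) = #Fix(g) (the juggling diagram of g has one fewer crossing, corresponding to a pinch move / saddle cobordism from Λ_g to Λ_f); or (ii) Cr(f) = Cr(g) and #Fix(g) = #Fix(f) + 1 (the diagrams have equal crossing numbers and g acquires one new fixed point). -/
namespace St7
open Finset





variable {n : ℕ}

lemma close_eq {i j : ℤ} (h : i % (n : ℤ) = j % (n : ℤ))
    (h1 : -(n : ℤ) < i - j) (h2 : i - j < (n : ℤ)) : i = j := by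
  have hd : (n : ℤ) ∣ j - i := Int.ModEq.dvd h
  rcases hd with ⟨c, hc⟩
  rcases lt_trichotomy c 0 with h' | h' | h'
  · nlinarith
  · subst h'; simp at hc; omega
  · nlinarith

lemma eq_addmul_of_mod {i j : ℤ} (h : i % (n : ℤ) = j % (n : ℤ)) :
    ∃ t : ℤ, i = j + t * (n : ℤ) := by
  have hd : (n : ℤ) ∣ j - i := Int.ModEq.dvd h
  rcases hd with ⟨c, hc⟩
  exact ⟨-c, by linarith⟩

lemma mod_shift (t i : ℤ) : (i + t * (n : ℤ)) % (n : ℤ) = i % (n : ℤ) :=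
  Int.add_mul_emod_self_right _ _ _

lemma mod_add_n (i : ℤ) : (i + (n : ℤ)) % (n : ℤ) = i % (n : ℤ) := by
  have := mod_shift (n := n) 1 i; simpa using this

lemma mod_add_one {i j : ℤ} (h : i % (n : ℤ) = j % (n : ℤ)) :
    (i + 1) % (n : ℤ) = (j + 1) % (n : ℤ) := Int.ModEq.add_right 1 h

lemma mod_sub_one {i j : ℤ} (h : i % (n : ℤ) = j % (n : ℤ)) :
    (i - 1) % (n : ℤ) = (j - 1) % (n : ℤ) := Int.ModEq.sub_right 1 h

lemma succ_res_ne (hn2 : 2 ≤ n) (w : ℤ) : (w + 1) % (n : ℤ) ≠ w % (n : ℤ) := by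
  intro h
  rcases eq_addmul_of_mod h with ⟨t, ht⟩
  have htn : t * (n : ℤ) = 1 := by omega
  have hn : (2 : ℤ) ≤ (n : ℤ) := by exact_mod_cast hn2
  rcases lt_trichotomy t 0 with h' | h' | h'
  · nlinarith
  · subst h'; simp at htn
  · nlinarith

lemma period_mul {F : ℤ → ℤ} (hF : ∀ i, F (i + (n : ℤ)) = F i + (n : ℤ)) :
    ∀ t m : ℤ, F (m + t * (n : ℤ)) = F m + t * (n : ℤ) := by
  intro t
  induction t using Int.induction_on with
  | zero => simp
  | succ i ih =>
      intro m
      have h1 : m + ((i : ℤ) + 1) * (n : ℤ) = (m + i * n) + n := by ring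
      rw [h1, hF, ih]; ring
  | pred i ih =>
      intro m
      have h1 : m + (-(i : ℤ)) * (n : ℤ) = (m + (-(i : ℤ) - 1) * n) + n := by ring
      have h2 := hF (m + (-(i : ℤ) - 1) * n)
      rw [← h1, ih] at h2
      have : F (m + (-(i : ℤ) - 1) * n) = F m + (-(i : ℤ)) * n - n := by omega
      rw [this]; ring

lemma sum_window (h : ℤ → ℕ) (hper : ∀ i, h (i + (n : ℤ)) = h i) (t : ℤ) :
    ∑ i ∈ Icc (t + 1) (t + (n : ℤ)), h i = ∑ i ∈ Icc 1 (n : ℤ), h i := by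
  have step : ∀ s : ℤ, ∑ i ∈ Icc (s + 1 + 1) (s + 1 + (n : ℤ)), h i
      = ∑ i ∈ Icc (s + 1) (s + (n : ℤ)), h i := by
    intro s
    rcases Nat.eq_zero_or_pos n with hn | hn
    · subst hn
      rw [Finset.Icc_eq_empty (by omega), Finset.Icc_eq_empty (by omega)]
    · have hn1 : (1 : ℤ) ≤ (n : ℤ) := by exact_mod_cast hn
      have e1 : Icc (s + 1 + 1) (s + 1 + (n : ℤ)) = insert (s + 1 + n) (Icc (s + 2) (s + n)) := by
        ext x; simp only [mem_insert, mem_Icc]; omega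
      have e2 : Icc (s + 1) (s + (n : ℤ)) = insert (s + 1) (Icc (s + 2) (s + n)) := by
        ext x; simp only [mem_insert, mem_Icc]; omega
      rw [e1, e2, Finset.sum_insert (by simp only [mem_Icc]; omega),
        Finset.sum_insert (by simp only [mem_Icc]; omega)]
      have := hper (s + 1)
      have e3 : s + 1 + (n : ℤ) = (s + 1) + n := by ring
      rw [e3, this]
  induction t using Int.induction_on with
  | zero => norm_num
  | succ i ih => rw [show ((i : ℤ) + 1) = (i : ℤ) + 1 by rfl, step (i : ℤ), ih]
  | pred i ih =>
      have := step (-(i : ℤ) - 1)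
      rw [show (-(i : ℤ) - 1 + 1) = -(i : ℤ) by ring] at this
      rw [show (-(i : ℤ) - 1 + 1) = -(i : ℤ) by ring, ← this]
      exact ih



open Finset


lemma sigma_fst {w m : ℤ} (h : m % (n : ℤ) = w % (n : ℤ)) : sigmaT n w m = m + 1 := by
  unfold sigmaT; rw [if_pos h]

lemma sigma_snd (hn2 : 2 ≤ n) {w m : ℤ} (h : m % (n : ℤ) = (w + 1) % (n : ℤ)) :
    sigmaT n w m = m - 1 := by
  unfold sigmaT
  rw [if_neg (by rw [h]; exact succ_res_ne hn2 w), if_pos h]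

lemma sigma_other {w m : ℤ} (h1 : m % (n : ℤ) ≠ w % (n : ℤ))
    (h2 : m % (n : ℤ) ≠ (w + 1) % (n : ℤ)) : sigmaT n w m = m := by
  unfold sigmaT; rw [if_neg h1, if_neg h2]

lemma sigma_invol (hn2 : 2 ≤ n) (w m : ℤ) : sigmaT n w (sigmaT n w m) = m := by
  by_cases h1 : m % (n : ℤ) = w % (n : ℤ)
  · rw [sigma_fst h1, sigma_snd hn2 (mod_add_one h1)]; ring
  · by_cases h2 : m % (n : ℤ) = (w + 1) % (n : ℤ)
    · rw [sigma_snd hn2 h2]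
      have : (m - 1) % (n : ℤ) = w % (n : ℤ) := by
        have := mod_sub_one h2; simpa using this
      rw [sigma_fst this]; ring
    · rw [sigma_other h1 h2, sigma_other h1 h2]

/-- number of affine inversions with first entry at `i` -/
noncomputable def invAt (n : ℕ) (F : ℤ → ℤ) (i : ℤ) : ℕ :=
  ((Finset.Icc (i + 1) (i + (n : ℤ))).filter (fun j => F j < F i)).card

/-- crossings with first strand at `i` -/
noncomputable def crAt (F : ℤ → ℤ) (i : ℤ) : ℕ :=
  ((Finset.Ioo i (F i)).filter (fun j => F i < F j)).card

def fixInd (F : ℤ → ℤ) (i : ℤ) : ℕ := if F i = i then 1 else 0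

noncomputable def invSum (n : ℕ) (F : ℤ → ℤ) : ℕ := ∑ i ∈ Finset.Icc 1 (n : ℤ), invAt n F i

section Per
variable {F : ℤ → ℤ} (hF : ∀ i, F (i + (n : ℤ)) = F i + (n : ℤ))
include hF

lemma apply_sub_n (j : ℤ) : F (j - (n : ℤ)) = F j - (n : ℤ) := by
  have h := hF (j - (n : ℤ))
  rw [show j - (n : ℤ) + (n : ℤ) = j by ring] at h
  omega

lemma invAt_per (i : ℤ) : invAt n F (i + (n : ℤ)) = invAt n F i := by
  unfold invAt
  apply Finset.card_bij' (fun j _ => j - (n : ℤ)) (fun j _ => j + (n : ℤ))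
  · intro a ha
    simp only [mem_filter, mem_Icc] at ha ⊢
    rw [apply_sub_n hF a]
    have := hF i
    constructor
    · omega
    · omega
  · intro a ha
    simp only [mem_filter, mem_Icc] at ha ⊢
    rw [hF a]
    have := hF i
    constructor
    · omega
    · omega
  · intro a _; ring
  · intro a _; ring

lemma crAt_per (i : ℤ) : crAt F (i + (n : ℤ)) = crAt F i := by
  unfold crAt
  apply Finset.card_bij' (fun j _ => j - (n : ℤ)) (fun j _ => j + (n : ℤ))
  · intro a ha
    simp only [mem_filter, mem_Ioo, hF] at ha ⊢
    rw [apply_sub_n hF a]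
    omega
  · intro a ha
    simp only [mem_filter, mem_Ioo, hF] at ha ⊢
    omega
  · intro a _; ring
  · intro a _; ring

lemma fixInd_per (i : ℤ) : fixInd F (i + (n : ℤ)) = fixInd F i := by
  unfold fixInd
  rw [hF i]
  by_cases h : F i = i
  · rw [if_pos h, if_pos (by omega)]
  · rw [if_neg h, if_neg (by omega)]

end Per



section Identity

variable {k : ℕ} (f : BoundedAffinePerm k n)

lemma crAt_invAt_identity (i : ℤ) :
    (crAt f.toFun i : ℤ) + (invAt n f.toFun i : ℤ)
      = (f.toFun i - i) - 1 + fixInd f.toFun i := by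
  have hset : (Finset.Icc (i + 1) (i + (n : ℤ))).filter (fun j => f.toFun j < f.toFun i)
      = (Finset.Ioo i (f.toFun i)).filter (fun j => f.toFun j < f.toFun i) := by
    ext j
    simp only [mem_filter, mem_Icc, mem_Ioo]
    constructor
    · rintro ⟨⟨h1, h2⟩, h3⟩
      exact ⟨⟨by omega, lt_of_le_of_lt (f.le_apply j) h3⟩, h3⟩
    · rintro ⟨⟨h1, h2⟩, h3⟩
      have := f.apply_le i
      exact ⟨⟨by omega, by omega⟩, h3⟩
  have hpart : ((Finset.Ioo i (f.toFun i)).filter (fun j => f.toFun j < f.toFun i)).card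
      + ((Finset.Ioo i (f.toFun i)).filter (fun j => ¬ (f.toFun j < f.toFun i))).card
      = (Finset.Ioo i (f.toFun i)).card :=
    Finset.card_filter_add_card_filter_not _
  have hcongr : (Finset.Ioo i (f.toFun i)).filter (fun j => ¬ (f.toFun j < f.toFun i))
      = (Finset.Ioo i (f.toFun i)).filter (fun j => f.toFun i < f.toFun j) := by
    apply Finset.filter_congr
    intro j hj
    simp only [mem_Ioo] at hj
    have hne : f.toFun j ≠ f.toFun i := fun he => by
      have := f.bijective.1 he; omega
    omega
  rw [hcongr] at hpart
  have hcard : (Finset.Ioo i (f.toFun i)).card = (f.toFun i - i - 1).toNat := Int.card_Ioo _ _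
  have hle := f.le_apply i
  unfold crAt invAt fixInd
  rw [hset]
  rcases eq_or_lt_of_le hle with he | hlt
  · rw [if_pos he.symm]
    have hemp : Finset.Ioo i (f.toFun i) = ∅ := by rw [← he]; simp
    rw [hemp, Finset.filter_empty, Finset.filter_empty] at hpart ⊢
    simp only [Finset.card_empty, Nat.cast_zero]
    omega
  · rw [if_neg (by omega)]
    have h2 := hpart
    zify at h2
    rw [hcard, Int.toNat_of_nonneg (by omega)] at h2
    omega

lemma key_identity :
    (f.crossings : ℤ) + (invSum n f.toFun : ℤ) + (n : ℤ)
      = (n : ℤ) * (k : ℤ) + (f.fixCount : ℤ) := by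
  have hsum : ∑ i ∈ Finset.Icc (1 : ℤ) (n : ℤ),
      ((crAt f.toFun i : ℤ) + (invAt n f.toFun i : ℤ))
      = ∑ i ∈ Finset.Icc (1 : ℤ) (n : ℤ),
        ((f.toFun i - i) - 1 + fixInd f.toFun i) :=
    Finset.sum_congr rfl (fun i _ => crAt_invAt_identity f i)
  have hcr : (f.crossings : ℤ) = ∑ i ∈ Finset.Icc (1 : ℤ) (n : ℤ), (crAt f.toFun i : ℤ) := by
    unfold BoundedAffinePerm.crossings crAt
    push_cast
    rfl
  have hinv : (invSum n f.toFun : ℤ) = ∑ i ∈ Finset.Icc (1 : ℤ) (n : ℤ), (invAt n f.toFun i : ℤ) := by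
    unfold invSum; push_cast; rfl
  have hfix : (f.fixCount : ℤ) = ∑ i ∈ Finset.Icc (1 : ℤ) (n : ℤ), (fixInd f.toFun i : ℤ) := by
    unfold BoundedAffinePerm.fixCount fixInd
    rw [Finset.card_filter]
    push_cast
    rfl
  have hcardIcc : ((Finset.Icc (1 : ℤ) (n : ℤ)).card : ℤ) = (n : ℤ) := by
    rw [Int.card_Icc]
    simp
  rw [Finset.sum_add_distrib] at hsum
  rw [hcr, hinv, hfix]
  have hsplit : ∑ i ∈ Finset.Icc (1 : ℤ) (n : ℤ), ((f.toFun i - i) - 1 + fixInd f.toFun i)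
      = (∑ i ∈ Finset.Icc (1 : ℤ) (n : ℤ), (f.toFun i - i))
        - (Finset.Icc (1 : ℤ) (n : ℤ)).card
        + ∑ i ∈ Finset.Icc (1 : ℤ) (n : ℤ), (fixInd f.toFun i : ℤ) := by
    rw [Finset.sum_add_distrib, Finset.sum_sub_distrib, Finset.sum_const]
    simp [mul_comm]
  rw [hsplit, f.sum_eq, hcardIcc] at hsum
  omega

lemma invSum_eq_length : invSum n f.toFun = f.length := by
  have step1 : ∀ i ∈ Finset.Icc (1 : ℤ) (n : ℤ),
      invAt n f.toFun i = ((Finset.Icc (1 : ℤ) (2 * n : ℤ)).filter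
        (fun j => i < j ∧ f.toFun j < f.toFun i)).card := by
    intro i hi
    simp only [mem_Icc] at hi
    unfold invAt
    congr 1
    ext j
    simp only [mem_filter, mem_Icc]
    have h1 := f.le_apply j
    have h2 := f.apply_le i
    constructor
    · rintro ⟨⟨ha, hb⟩, hc⟩
      exact ⟨⟨by omega, by omega⟩, by omega, hc⟩
    · rintro ⟨⟨ha, hb⟩, hc, hd⟩
      exact ⟨⟨by omega, by omega⟩, hd⟩
  have step2 : invSum n f.toFun = ((Finset.Icc (1 : ℤ) (n : ℤ) ×ˢ Finset.Icc (1 : ℤ) (2 * n : ℤ)).filter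
      (fun p => p.1 < p.2 ∧ f.toFun p.2 < f.toFun p.1)).card := by
    unfold invSum
    rw [Finset.card_filter, Finset.sum_product]
    apply Finset.sum_congr rfl
    intro i hi
    rw [step1 i hi, Finset.card_filter]
  rw [step2]
  unfold BoundedAffinePerm.length
  apply Finset.card_bij'
    (i := fun p _ => if p.2 ≤ (n : ℤ) then p else (p.2 - n, p.1))
    (j := fun p _ => if f.toFun p.2 < f.toFun p.1 then p else (p.2, p.1 + n))
  · rintro ⟨i, j⟩ ha
    simp only [mem_filter, mem_product, mem_Icc] at ha ⊢
    obtain ⟨⟨⟨hi1, hi2⟩, hj1, hj2⟩, hij, hFlt⟩ := ha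
    have hFji := f.le_apply j
    have hFi := f.apply_le i
    by_cases hc : j ≤ (n : ℤ)
    · rw [if_pos hc]
      exact ⟨⟨⟨hi1, hi2⟩, by omega, hc⟩, hij, Or.inl hFlt⟩
    · rw [if_neg hc]
      have hper : f.toFun (j - n) = f.toFun j - n := apply_sub_n f.periodic j
      refine ⟨⟨⟨by omega, by omega⟩, hi1, hi2⟩, by omega, Or.inr ?_⟩
      dsimp only
      rw [hper]; omega
  · rintro ⟨i, j⟩ ha
    simp only [mem_filter, mem_product, mem_Icc] at ha ⊢
    obtain ⟨⟨⟨hi1, hi2⟩, hj1, hj2⟩, hij, hor⟩ := ha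
    by_cases hc : f.toFun j < f.toFun i
    · rw [if_pos hc]
      exact ⟨⟨⟨hi1, hi2⟩, by omega⟩, hij, hc⟩
    · rw [if_neg hc]
      have hd : f.toFun i < f.toFun j - n := by rcases hor with h | h <;> omega
      have hper : f.toFun (i + n) = f.toFun i + n := f.periodic i
      refine ⟨⟨⟨hj1, hj2⟩, by omega⟩, by omega, ?_⟩
      dsimp only
      rw [hper]; omega
  · rintro ⟨i, j⟩ ha
    simp only [mem_filter, mem_product, mem_Icc] at ha
    obtain ⟨⟨⟨hi1, hi2⟩, hj1, hj2⟩, hij, hFlt⟩ := ha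
    by_cases hc : j ≤ (n : ℤ)
    · simp only [if_pos hc, if_pos hFlt]
    · have hper : f.toFun (j - n) = f.toFun j - n := apply_sub_n f.periodic j
      have hnc : ¬ f.toFun (j - (n : ℤ), i).2 < f.toFun (j - (n : ℤ), i).1 := by
        dsimp only
        rw [hper]; have := f.le_apply j; omega
      simp only [if_neg hc, if_neg hnc]
      have heq : j - (n : ℤ) + n = j := by ring
      rw [heq]
  · rintro ⟨i, j⟩ ha
    simp only [mem_filter, mem_product, mem_Icc] at ha
    obtain ⟨⟨⟨hi1, hi2⟩, hj1, hj2⟩, hij, hor⟩ := ha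
    by_cases hc : f.toFun j < f.toFun i
    · simp only [if_pos hc, if_pos (show j ≤ (n : ℤ) from hj2)]
    · have hd : f.toFun i < f.toFun j - n := by rcases hor with h | h <;> omega
      have hnc : ¬ (j, i + (n : ℤ)).2 ≤ (n : ℤ) := by dsimp only; omega
      simp only [if_neg hc, if_neg hnc]
      have heq : i + (n : ℤ) - n = i := by ring
      rw [heq]

end Identity

section Local

variable {k : ℕ} (f g : BoundedAffinePerm k n)

lemma tmul_one {t : ℤ} (hn : 1 ≤ (n : ℤ)) (h1 : 0 < t * (n : ℤ)) (h2 : t * (n : ℤ) < 2 * n) :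
    t = 1 := by
  rcases lt_trichotomy t 1 with h | h | h
  · have ht : t ≤ 0 := by omega
    nlinarith
  · exact h
  · have ht : 2 ≤ t := by omega
    nlinarith

lemma tmul_zero {t : ℤ} (hn : 1 ≤ (n : ℤ)) (h1 : -(n : ℤ) < t * n) (h2 : t * (n : ℤ) < n) :
    t = 0 := by
  rcases lt_trichotomy t 0 with h | h | h
  · have ht : t ≤ -1 := by omega
    nlinarith
  · exact h
  · have ht : 1 ≤ t := by omega
    nlinarith

lemma sum_split2 {s : Finset ℤ} {h : ℤ → ℕ} {u v : ℤ} (hu : u ∈ s) (hv : v ∈ s)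
    (huv : u ≠ v) :
    ∑ i ∈ s, h i = h u + h v + ∑ i ∈ (s.erase u).erase v, h i := by
  rw [← Finset.add_sum_erase s h hu,
    ← Finset.add_sum_erase _ h (Finset.mem_erase.2 ⟨fun hx => huv hx.symm, hv⟩)]
  ring

lemma invSum_window (t : ℤ) :
    invSum n f.toFun = ∑ i ∈ Finset.Icc (t + 1) (t + (n : ℤ)), invAt n f.toFun i :=
  (sum_window _ (invAt_per f.periodic) t).symm

lemma fixCount_eq : f.fixCount = ∑ i ∈ Finset.Icc (1 : ℤ) (n : ℤ), fixInd f.toFun i := by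
  unfold BoundedAffinePerm.fixCount fixInd
  rw [Finset.card_filter]

lemma fixCount_window (t : ℤ) :
    f.fixCount = ∑ i ∈ Finset.Icc (t + 1) (t + (n : ℤ)), fixInd f.toFun i := by
  rw [fixCount_eq, ← sum_window _ (fixInd_per f.periodic) t]

/-- per-position invariance of the inversion count, right case -/
lemma invAt_comp_sigma (hn2 : 2 ≤ n) (w i : ℤ)
    (hg : ∀ m, g.toFun m = f.toFun (sigmaT n w m))
    (hi1 : i % (n : ℤ) ≠ w % (n : ℤ)) (hi2 : i % (n : ℤ) ≠ (w + 1) % (n : ℤ)) :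
    invAt n g.toFun i = invAt n f.toFun i := by
  have hgi : g.toFun i = f.toFun i := by rw [hg i, sigma_other hi1 hi2]
  have hmem : ∀ j ∈ Finset.Icc (i + 1) (i + (n : ℤ)),
      sigmaT n w j ∈ Finset.Icc (i + 1) (i + (n : ℤ)) := by
    intro j hj
    simp only [Finset.mem_Icc] at hj ⊢
    by_cases hj1 : j % (n : ℤ) = w % (n : ℤ)
    · rw [sigma_fst hj1]
      have hne : j ≠ i + n := by
        intro he
        apply hi1
        rw [← mod_add_n (n := n) i, ← he, hj1]
      omega
    · by_cases hj2 : j % (n : ℤ) = (w + 1) % (n : ℤ)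
      · rw [sigma_snd hn2 hj2]
        have hne : j ≠ i + 1 := by
          intro he
          apply hi1
          have := mod_sub_one hj2
          rw [he] at this
          simp only [add_sub_cancel_right] at this
          exact this
        omega
      · rw [sigma_other hj1 hj2]
        omega
  unfold invAt
  apply Finset.card_bij' (fun j _ => sigmaT n w j) (fun j _ => sigmaT n w j)
  · intro j hj
    simp only [Finset.mem_filter] at hj ⊢
    refine ⟨hmem j hj.1, ?_⟩
    rw [← hg j, ← hgi]
    exact hj.2
  · intro j hj
    simp only [Finset.mem_filter] at hj ⊢
    refine ⟨hmem j hj.1, ?_⟩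
    rw [hg (sigmaT n w j), sigma_invol hn2, hgi]
    exact hj.2
  · intro j _; exact sigma_invol hn2 w j
  · intro j _; exact sigma_invol hn2 w j

lemma right_case (hn2 : 2 ≤ n) (w : ℤ)
    (hg : ∀ m, g.toFun m = f.toFun (sigmaT n w m))
    (hlt : invSum n f.toFun < invSum n g.toFun) :
    invSum n g.toFun = invSum n f.toFun + 1 ∧
      (g.fixCount = f.fixCount ∨ g.fixCount = f.fixCount + 1) := by
  have hn' : (2 : ℤ) ≤ (n : ℤ) := by exact_mod_cast hn2
  have hgw : g.toFun w = f.toFun (w + 1) := by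
    rw [hg w, sigma_fst rfl]
  have hgw1 : g.toFun (w + 1) = f.toFun w := by
    rw [hg (w + 1), sigma_snd hn2 rfl, show w + 1 - 1 = w from by ring]
  have ha_lb : w + 1 ≤ f.toFun w := by have := g.le_apply (w + 1); omega
  have ha_ub : f.toFun w ≤ w + n := f.apply_le w
  have hb_lb : w + 1 ≤ f.toFun (w + 1) := f.le_apply (w + 1)
  have hb_ub : f.toFun (w + 1) ≤ w + n := by have := g.apply_le w; omega
  have hab_ne : f.toFun w ≠ f.toFun (w + 1) := by
    intro h
    have := f.bijective.1 h
    omega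
  -- middle residues
  have hmidres : ∀ j : ℤ, w + 2 ≤ j → j ≤ w + (n : ℤ) - 1 →
      j % (n : ℤ) ≠ w % (n : ℤ) ∧ j % (n : ℤ) ≠ (w + 1) % (n : ℤ) := by
    intro j h1 h2
    constructor
    · intro h
      have := close_eq h (by omega) (by omega)
      omega
    · intro h
      have := close_eq h (by omega) (by omega)
      omega
  have gmid : ∀ j : ℤ, j % (n : ℤ) ≠ w % (n : ℤ) → j % (n : ℤ) ≠ (w + 1) % (n : ℤ) →
      g.toFun j = f.toFun j := by
    intro j h1 h2
    rw [hg j, sigma_other h1 h2]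
  -- values at shifted points
  have hfwn : f.toFun (w + (n : ℤ)) = f.toFun w + n := f.periodic w
  have hfwn1 : f.toFun (w + (n : ℤ) + 1) = f.toFun (w + 1) + n := by
    rw [show w + (n : ℤ) + 1 = (w + 1) + n from by ring, f.periodic (w + 1)]
  have hgwn : g.toFun (w + (n : ℤ)) = f.toFun (w + 1) + n := by
    rw [g.periodic w, hgw]
  have hgwn1 : g.toFun (w + (n : ℤ) + 1) = f.toFun w + n := by
    rw [show w + (n : ℤ) + 1 = (w + 1) + n from by ring, g.periodic (w + 1), hgw1]
  -- window decompositions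
  have hdec1 : Finset.Icc (w + 1) (w + (n : ℤ)) =
      insert (w + 1) (insert (w + (n : ℤ)) (Finset.Icc (w + 2) (w + (n : ℤ) - 1))) := by
    ext x; simp only [Finset.mem_insert, Finset.mem_Icc]; omega
  have hdec2 : Finset.Icc (w + 2) (w + 1 + (n : ℤ)) =
      insert (w + (n : ℤ)) (insert (w + (n : ℤ) + 1) (Finset.Icc (w + 2) (w + (n : ℤ) - 1))) := by
    ext x; simp only [Finset.mem_insert, Finset.mem_Icc]; omega
  have hnm1 : (w + 1) ∉ insert (w + (n : ℤ)) (Finset.Icc (w + 2) (w + (n : ℤ) - 1)) := by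
    simp only [Finset.mem_insert, Finset.mem_Icc]; omega
  have hnm2 : (w + (n : ℤ)) ∉ Finset.Icc (w + 2) (w + (n : ℤ) - 1) := by
    simp only [Finset.mem_Icc]; omega
  have hnm3 : (w + (n : ℤ)) ∉ insert (w + (n : ℤ) + 1) (Finset.Icc (w + 2) (w + (n : ℤ) - 1)) := by
    simp only [Finset.mem_insert, Finset.mem_Icc]; omega
  have hnm4 : (w + (n : ℤ) + 1) ∉ Finset.Icc (w + 2) (w + (n : ℤ) - 1) := by
    simp only [Finset.mem_Icc]; omega
  have hmid_g : ∀ j ∈ Finset.Icc (w + 2) (w + (n : ℤ) - 1), g.toFun j = f.toFun j := by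
    intro j hj
    simp only [Finset.mem_Icc] at hj
    obtain ⟨h1, h2⟩ := hmidres j hj.1 hj.2
    exact gmid j h1 h2
  -- endpoint computations
  have e1 : invAt n g.toFun w =
      (if f.toFun w < f.toFun (w + 1) then 1 else 0) +
        ∑ j ∈ Finset.Icc (w + 2) (w + (n : ℤ) - 1),
          (if f.toFun j < f.toFun (w + 1) then 1 else 0) := by
    unfold invAt
    rw [Finset.card_filter, hdec1, Finset.sum_insert hnm1, Finset.sum_insert hnm2]
    rw [hgw, hgw1, hgwn]
    rw [if_neg (show ¬ (f.toFun (w + 1) + (n : ℤ) < f.toFun (w + 1)) from by omega)]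
    have : ∑ j ∈ Finset.Icc (w + 2) (w + (n : ℤ) - 1),
        (if g.toFun j < f.toFun (w + 1) then 1 else 0) =
        ∑ j ∈ Finset.Icc (w + 2) (w + (n : ℤ) - 1),
          (if f.toFun j < f.toFun (w + 1) then 1 else 0) := by
      apply Finset.sum_congr rfl
      intro j hj
      rw [hmid_g j hj]
    rw [this]
    omega
  have e2 : invAt n f.toFun (w + 1) =
      ∑ j ∈ Finset.Icc (w + 2) (w + (n : ℤ) - 1),
        (if f.toFun j < f.toFun (w + 1) then 1 else 0) := by
    unfold invAt
    rw [Finset.card_filter, show w + 1 + 1 = w + 2 from by ring, hdec2,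
      Finset.sum_insert hnm3, Finset.sum_insert hnm4]
    rw [hfwn, hfwn1]
    rw [if_neg (show ¬ (f.toFun w + (n : ℤ) < f.toFun (w + 1)) from by omega),
      if_neg (show ¬ (f.toFun (w + 1) + (n : ℤ) < f.toFun (w + 1)) from by omega)]
    omega
  have e3 : invAt n f.toFun w =
      (if f.toFun (w + 1) < f.toFun w then 1 else 0) +
        ∑ j ∈ Finset.Icc (w + 2) (w + (n : ℤ) - 1),
          (if f.toFun j < f.toFun w then 1 else 0) := by
    unfold invAt
    rw [Finset.card_filter, hdec1, Finset.sum_insert hnm1, Finset.sum_insert hnm2]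
    rw [hfwn]
    rw [if_neg (show ¬ (f.toFun w + (n : ℤ) < f.toFun w) from by omega)]
    omega
  have e4 : invAt n g.toFun (w + 1) =
      ∑ j ∈ Finset.Icc (w + 2) (w + (n : ℤ) - 1),
        (if f.toFun j < f.toFun w then 1 else 0) := by
    unfold invAt
    rw [Finset.card_filter, show w + 1 + 1 = w + 2 from by ring, hdec2,
      Finset.sum_insert hnm3, Finset.sum_insert hnm4]
    rw [hgw1, hgwn, hgwn1]
    rw [if_neg (show ¬ (f.toFun (w + 1) + (n : ℤ) < f.toFun w) from by omega),
      if_neg (show ¬ (f.toFun w + (n : ℤ) < f.toFun w) from by omega)]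
    have : ∑ j ∈ Finset.Icc (w + 2) (w + (n : ℤ) - 1),
        (if g.toFun j < f.toFun w then 1 else 0) =
        ∑ j ∈ Finset.Icc (w + 2) (w + (n : ℤ) - 1),
          (if f.toFun j < f.toFun w then 1 else 0) := by
      apply Finset.sum_congr rfl
      intro j hj
      rw [hmid_g j hj]
    rw [this]
    omega
  -- window sums
  have hw_mem : w ∈ Finset.Icc (w - 1 + 1) (w - 1 + (n : ℤ)) := by
    simp only [Finset.mem_Icc]; omega
  have hw1_mem : (w + 1) ∈ Finset.Icc (w - 1 + 1) (w - 1 + (n : ℤ)) := by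
    simp only [Finset.mem_Icc]; omega
  have hmid_inv : ∀ i ∈ ((Finset.Icc (w - 1 + 1) (w - 1 + (n : ℤ))).erase w).erase (w + 1),
      invAt n g.toFun i = invAt n f.toFun i := by
    intro i hi
    simp only [Finset.mem_erase, Finset.mem_Icc] at hi
    obtain ⟨hi1, hi2, hi3, hi4⟩ := hi
    obtain ⟨h1, h2⟩ := hmidres i (by omega) (by omega)
    exact invAt_comp_sigma f g hn2 w i hg h1 h2
  have hsum_f : invSum n f.toFun = invAt n f.toFun w + invAt n f.toFun (w + 1) +
      ∑ i ∈ ((Finset.Icc (w - 1 + 1) (w - 1 + (n : ℤ))).erase w).erase (w + 1),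
        invAt n f.toFun i := by
    rw [invSum_window f (w - 1)]
    exact sum_split2 hw_mem hw1_mem (by omega)
  have hsum_g : invSum n g.toFun = invAt n g.toFun w + invAt n g.toFun (w + 1) +
      ∑ i ∈ ((Finset.Icc (w - 1 + 1) (w - 1 + (n : ℤ))).erase w).erase (w + 1),
        invAt n f.toFun i := by
    rw [invSum_window g (w - 1), sum_split2 hw_mem hw1_mem (by omega)]
    congr 1
    exact Finset.sum_congr rfl hmid_inv
  -- conclude inversion count relation
  have hkey : invSum n g.toFun + (if f.toFun (w + 1) < f.toFun w then 1 else 0)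
      = invSum n f.toFun + (if f.toFun w < f.toFun (w + 1) then 1 else 0) := by
    rw [hsum_f, hsum_g, e1, e2, e3, e4]
    ring
  have hab : f.toFun w < f.toFun (w + 1) := by
    rcases lt_trichotomy (f.toFun w) (f.toFun (w + 1)) with h | h | h
    · exact h
    · exact absurd h hab_ne
    · rw [if_pos h, if_neg (by omega)] at hkey
      omega
  have hinv_concl : invSum n g.toFun = invSum n f.toFun + 1 := by
    rw [if_pos hab, if_neg (by omega)] at hkey
    omega
  refine ⟨hinv_concl, ?_⟩
  -- fixed points
  have hfix_f : f.fixCount = fixInd f.toFun w + fixInd f.toFun (w + 1) +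
      ∑ i ∈ ((Finset.Icc (w - 1 + 1) (w - 1 + (n : ℤ))).erase w).erase (w + 1),
        fixInd f.toFun i := by
    rw [fixCount_window f (w - 1)]
    exact sum_split2 hw_mem hw1_mem (by omega)
  have hfix_g : g.fixCount = fixInd g.toFun w + fixInd g.toFun (w + 1) +
      ∑ i ∈ ((Finset.Icc (w - 1 + 1) (w - 1 + (n : ℤ))).erase w).erase (w + 1),
        fixInd f.toFun i := by
    rw [fixCount_window g (w - 1), sum_split2 hw_mem hw1_mem (by omega)]
    congr 1
    apply Finset.sum_congr rfl
    intro i hi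
    simp only [Finset.mem_erase, Finset.mem_Icc] at hi
    obtain ⟨hi1, hi2, hi3, hi4⟩ := hi
    obtain ⟨h1, h2⟩ := hmidres i (by omega) (by omega)
    unfold fixInd
    rw [gmid i h1 h2]
  have hff1 : fixInd f.toFun w = 0 := by unfold fixInd; rw [if_neg (by omega)]
  have hff2 : fixInd f.toFun (w + 1) = 0 := by unfold fixInd; rw [if_neg (by omega)]
  have hgf1 : fixInd g.toFun w = 0 := by unfold fixInd; rw [hgw, if_neg (by omega)]
  have hgf2 : fixInd g.toFun (w + 1) = if f.toFun w = w + 1 then 1 else 0 := by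
    unfold fixInd; rw [hgw1]
  by_cases hc : f.toFun w = w + 1
  · right
    rw [hfix_g, hfix_f, hff1, hff2, hgf1, hgf2, if_pos hc]
    omega
  · left
    rw [hfix_g, hfix_f, hff1, hff2, hgf1, hgf2, if_neg hc]

lemma left_case (hn2 : 2 ≤ n) (v : ℤ)
    (hg : ∀ m, g.toFun m = sigmaT n v (f.toFun m))
    (hlt : invSum n f.toFun < invSum n g.toFun) :
    invSum n g.toFun = invSum n f.toFun + 1 ∧
      (g.fixCount = f.fixCount ∨ g.fixCount = f.fixCount + 1) := by
  have hn' : (2 : ℤ) ≤ (n : ℤ) := by exact_mod_cast hn2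
  obtain ⟨p, hp⟩ := f.bijective.2 v
  obtain ⟨q, hq⟩ := f.bijective.2 (v + 1)
  have hgp : g.toFun p = v + 1 := by rw [hg p, hp, sigma_fst rfl]
  have hgq : g.toFun q = v := by rw [hg q, hq, sigma_snd hn2 rfl]; ring
  have hpv : p ≤ v := by have := f.le_apply p; omega
  have hqv : q ≤ v := by have := g.le_apply q; omega
  have hvp : v + 1 ≤ p + n := by have := g.apply_le p; omega
  have hvq : v + 1 ≤ q + n := by have := f.apply_le q; omega
  have hres : p % (n : ℤ) ≠ q % (n : ℤ) := by
    intro h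
    obtain ⟨t, ht⟩ := eq_addmul_of_mod h
    have h2 : f.toFun (q + t * (n : ℤ)) = (v + 1) + t * n := by
      rw [period_mul f.periodic t q, hq]
    rw [← ht, hp] at h2
    have ht0 : t = 0 := tmul_zero (n := n) (t := t) (by omega) (by omega) (by omega)
    rw [ht0] at h2
    simp at h2
  have hpq : p ≠ q := by intro h; rw [h] at hres; exact hres rfl
  have vresp : ∀ j : ℤ, f.toFun j % (n : ℤ) = v % (n : ℤ) → j % (n : ℤ) = p % (n : ℤ) := by
    intro j hj
    obtain ⟨t, ht⟩ := eq_addmul_of_mod hj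
    have h2 : f.toFun (p + t * (n : ℤ)) = v + t * n := by
      rw [period_mul f.periodic t p, hp]
    have h3 : j = p + t * (n : ℤ) := f.bijective.1 (ht.trans h2.symm)
    rw [h3]; exact mod_shift t p
  have vresq : ∀ j : ℤ, f.toFun j % (n : ℤ) = (v + 1) % (n : ℤ) → j % (n : ℤ) = q % (n : ℤ) := by
    intro j hj
    obtain ⟨t, ht⟩ := eq_addmul_of_mod hj
    have h2 : f.toFun (q + t * (n : ℤ)) = (v + 1) + t * n := by
      rw [period_mul f.periodic t q, hq]
    have h3 : j = q + t * (n : ℤ) := f.bijective.1 (ht.trans h2.symm)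
    rw [h3]; exact mod_shift t q
  have gmid : ∀ j : ℤ, j % (n : ℤ) ≠ p % (n : ℤ) → j % (n : ℤ) ≠ q % (n : ℤ) →
      g.toFun j = f.toFun j := by
    intro j h1 h2
    rw [hg j, sigma_other (fun h => h1 (vresp j h)) (fun h => h2 (vresq j h))]
  have fneqv : ∀ j : ℤ, j % (n : ℤ) ≠ p % (n : ℤ) → f.toFun j ≠ v := by
    intro j h1 h
    exact h1 (vresp j (by rw [h]))
  have hfpn : f.toFun (p + (n : ℤ)) = v + n := by rw [f.periodic, hp]
  have hfqn : f.toFun (q + (n : ℤ)) = v + 1 + n := by rw [f.periodic, hq]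
  have hgpn : g.toFun (p + (n : ℤ)) = v + 1 + n := by rw [g.periodic, hgp]
  have hgqn : g.toFun (q + (n : ℤ)) = v + n := by rw [g.periodic, hgq]
  -- per-position invariance away from the residues of p and q
  have hinv_mid : ∀ i : ℤ, i % (n : ℤ) ≠ p % (n : ℤ) → i % (n : ℤ) ≠ q % (n : ℤ) →
      invAt n g.toFun i = invAt n f.toFun i := by
    intro i hi1 hi2
    have hgi : g.toFun i = f.toFun i := gmid i hi1 hi2
    unfold invAt
    apply congrArg Finset.card
    apply Finset.filter_congr
    intro j hj
    rw [hgi]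
    by_cases hj1 : j % (n : ℤ) = p % (n : ℤ)
    · obtain ⟨t, ht⟩ := eq_addmul_of_mod hj1
      have hfj : f.toFun j = v + t * (n : ℤ) := by
        rw [ht, period_mul f.periodic t p, hp]
      have hgj : g.toFun j = f.toFun j + 1 := by
        rw [hg j, hfj, sigma_fst (mod_shift t v)]
      have hne : f.toFun i ≠ v + t * (n : ℤ) + 1 := by
        intro h
        apply hi2
        apply vresq
        rw [h, show v + t * (n : ℤ) + 1 = (v + 1) + t * n from by ring, mod_shift]
      rw [hgj, hfj]
      omega
    · by_cases hj2 : j % (n : ℤ) = q % (n : ℤ)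
      · obtain ⟨t, ht⟩ := eq_addmul_of_mod hj2
        have hfj : f.toFun j = (v + 1) + t * (n : ℤ) := by
          rw [ht, period_mul f.periodic t q, hq]
        have hgj : g.toFun j = f.toFun j - 1 := by
          rw [hg j, hfj, sigma_snd hn2 (mod_shift t (v + 1))]
        have hne : f.toFun i ≠ (v + 1) + t * (n : ℤ) := by
          intro h
          apply hi2
          apply vresq
          rw [h, mod_shift]
        rw [hgj, hfj]
        omega
      · rw [gmid j hj1 hj2]
  rcases lt_or_gt_of_ne hpq with hplt | hqlt
  · -- p < q : the good case
    have key1 : ∀ j : ℤ, p + 1 ≤ j → j ≤ p + (n : ℤ) → j ≠ q →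
        (g.toFun j < v + 1 ↔ f.toFun j < v) := by
      intro j h1 h2 hjq
      by_cases hr1 : j % (n : ℤ) = p % (n : ℤ)
      · obtain ⟨t, ht⟩ := eq_addmul_of_mod hr1
        have ht1 : t = 1 := tmul_one (n := n) (by omega) (by omega) (by omega)
        have hj : j = p + (n : ℤ) := by rw [ht, ht1]; ring
        rw [hj, hgpn, hfpn]
        omega
      · by_cases hr2 : j % (n : ℤ) = q % (n : ℤ)
        · obtain ⟨t, ht⟩ := eq_addmul_of_mod hr2
          have ht0 : t = 0 := tmul_zero (n := n) (by omega) (by omega) (by omega)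
          exact absurd (by rw [ht, ht0]; ring) hjq
        · rw [gmid j hr1 hr2]
          have := fneqv j hr1
          omega
    have key2 : ∀ j : ℤ, q + 1 ≤ j → j ≤ q + (n : ℤ) →
        (g.toFun j < v ↔ f.toFun j < v + 1) := by
      intro j h1 h2
      by_cases hr1 : j % (n : ℤ) = p % (n : ℤ)
      · obtain ⟨t, ht⟩ := eq_addmul_of_mod hr1
        have ht1 : t = 1 := tmul_one (n := n) (by omega) (by omega) (by omega)
        have hj : j = p + (n : ℤ) := by rw [ht, ht1]; ring
        rw [hj, hgpn, hfpn]
        omega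
      · by_cases hr2 : j % (n : ℤ) = q % (n : ℤ)
        · obtain ⟨t, ht⟩ := eq_addmul_of_mod hr2
          have ht1 : t = 1 := tmul_one (n := n) (by omega) (by omega) (by omega)
          have hj : j = q + (n : ℤ) := by rw [ht, ht1]; ring
          rw [hj, hgqn, hfqn]
          omega
        · rw [gmid j hr1 hr2]
          have := fneqv j hr1
          omega
    have E1 : invAt n g.toFun p = invAt n f.toFun p + 1 := by
      unfold invAt
      have hset : (Finset.Icc (p + 1) (p + (n : ℤ))).filter (fun j => g.toFun j < g.toFun p)
          = insert q ((Finset.Icc (p + 1) (p + (n : ℤ))).filter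
              (fun j => f.toFun j < f.toFun p)) := by
        ext j
        simp only [Finset.mem_insert, Finset.mem_filter, Finset.mem_Icc]
        rw [hgp, hp]
        constructor
        · rintro ⟨⟨h1, h2⟩, h3⟩
          by_cases hjq : j = q
          · exact Or.inl hjq
          · exact Or.inr ⟨⟨h1, h2⟩, (key1 j h1 h2 hjq).1 h3⟩
        · rintro (hjq | ⟨⟨h1, h2⟩, h3⟩)
          · subst hjq
            exact ⟨⟨by omega, by omega⟩, by rw [hgq]; omega⟩
          · have hjq : j ≠ q := by intro h; subst h; rw [hq] at h3; omega
            exact ⟨⟨h1, h2⟩, (key1 j h1 h2 hjq).2 h3⟩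
      rw [hset, Finset.card_insert_of_notMem]
      simp only [Finset.mem_filter, Finset.mem_Icc, hq, hp]
      omega
    have E2 : invAt n g.toFun q = invAt n f.toFun q := by
      unfold invAt
      apply congrArg Finset.card
      apply Finset.filter_congr
      intro j hj
      simp only [Finset.mem_Icc] at hj
      rw [hgq, hq]
      exact key2 j hj.1 hj.2
    -- sum over the window Icc p (p+n-1)
    have hp_mem : p ∈ Finset.Icc (p - 1 + 1) (p - 1 + (n : ℤ)) := by
      simp only [Finset.mem_Icc]; omega
    have hq_mem : q ∈ Finset.Icc (p - 1 + 1) (p - 1 + (n : ℤ)) := by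
      simp only [Finset.mem_Icc]; omega
    have hmid_res : ∀ i ∈ ((Finset.Icc (p - 1 + 1) (p - 1 + (n : ℤ))).erase p).erase q,
        i % (n : ℤ) ≠ p % (n : ℤ) ∧ i % (n : ℤ) ≠ q % (n : ℤ) := by
      intro i hi
      simp only [Finset.mem_erase, Finset.mem_Icc] at hi
      obtain ⟨hi1, hi2, hi3, hi4⟩ := hi
      constructor
      · intro h; have := close_eq h (by omega) (by omega); omega
      · intro h; have := close_eq h (by omega) (by omega); omega
    have hsum_f : invSum n f.toFun = invAt n f.toFun p + invAt n f.toFun q +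
        ∑ i ∈ ((Finset.Icc (p - 1 + 1) (p - 1 + (n : ℤ))).erase p).erase q,
          invAt n f.toFun i := by
      rw [invSum_window f (p - 1)]
      exact sum_split2 hp_mem hq_mem hpq
    have hsum_g : invSum n g.toFun = invAt n g.toFun p + invAt n g.toFun q +
        ∑ i ∈ ((Finset.Icc (p - 1 + 1) (p - 1 + (n : ℤ))).erase p).erase q,
          invAt n f.toFun i := by
      rw [invSum_window g (p - 1), sum_split2 hp_mem hq_mem hpq]
      congr 1
      apply Finset.sum_congr rfl
      intro i hi
      obtain ⟨h1, h2⟩ := hmid_res i hi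
      exact hinv_mid i h1 h2
    refine ⟨by rw [hsum_f, hsum_g, E1, E2]; ring, ?_⟩
    -- fixed points
    have hfix_f : f.fixCount = fixInd f.toFun p + fixInd f.toFun q +
        ∑ i ∈ ((Finset.Icc (p - 1 + 1) (p - 1 + (n : ℤ))).erase p).erase q,
          fixInd f.toFun i := by
      rw [fixCount_window f (p - 1)]
      exact sum_split2 hp_mem hq_mem hpq
    have hfix_g : g.fixCount = fixInd g.toFun p + fixInd g.toFun q +
        ∑ i ∈ ((Finset.Icc (p - 1 + 1) (p - 1 + (n : ℤ))).erase p).erase q,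
          fixInd f.toFun i := by
      rw [fixCount_window g (p - 1), sum_split2 hp_mem hq_mem hpq]
      congr 1
      apply Finset.sum_congr rfl
      intro i hi
      obtain ⟨h1, h2⟩ := hmid_res i hi
      unfold fixInd
      rw [gmid i h1 h2]
    have hff1 : fixInd f.toFun p = 0 := by unfold fixInd; rw [hp, if_neg (by omega)]
    have hff2 : fixInd f.toFun q = 0 := by unfold fixInd; rw [hq, if_neg (by omega)]
    have hgf1 : fixInd g.toFun p = 0 := by unfold fixInd; rw [hgp, if_neg (by omega)]
    have hgf2 : fixInd g.toFun q = if v = q then 1 else 0 := by unfold fixInd; rw [hgq]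
    by_cases hc : v = q
    · right
      rw [hfix_g, hfix_f, hff1, hff2, hgf1, hgf2, if_pos hc]
      omega
    · left
      rw [hfix_g, hfix_f, hff1, hff2, hgf1, hgf2, if_neg hc]
  · -- q < p : contradiction with hlt
    exfalso
    have key1' : ∀ j : ℤ, p + 1 ≤ j → j ≤ p + (n : ℤ) →
        (g.toFun j < v + 1 ↔ f.toFun j < v) := by
      intro j h1 h2
      by_cases hr1 : j % (n : ℤ) = p % (n : ℤ)
      · obtain ⟨t, ht⟩ := eq_addmul_of_mod hr1
        have ht1 : t = 1 := tmul_one (n := n) (by omega) (by omega) (by omega)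
        have hj : j = p + (n : ℤ) := by rw [ht, ht1]; ring
        rw [hj, hgpn, hfpn]
        omega
      · by_cases hr2 : j % (n : ℤ) = q % (n : ℤ)
        · obtain ⟨t, ht⟩ := eq_addmul_of_mod hr2
          have ht1 : t = 1 := tmul_one (n := n) (by omega) (by omega) (by omega)
          have hj : j = q + (n : ℤ) := by rw [ht, ht1]; ring
          rw [hj, hgqn, hfqn]
          omega
        · rw [gmid j hr1 hr2]
          have := fneqv j hr1
          omega
    have key2' : ∀ j : ℤ, q + 1 ≤ j → j ≤ q + (n : ℤ) → j ≠ p →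
        (g.toFun j < v ↔ f.toFun j < v + 1) := by
      intro j h1 h2 hjp
      by_cases hr1 : j % (n : ℤ) = p % (n : ℤ)
      · obtain ⟨t, ht⟩ := eq_addmul_of_mod hr1
        have ht0 : t = 0 := tmul_zero (n := n) (by omega) (by omega) (by omega)
        exact absurd (by rw [ht, ht0]; ring) hjp
      · by_cases hr2 : j % (n : ℤ) = q % (n : ℤ)
        · obtain ⟨t, ht⟩ := eq_addmul_of_mod hr2
          have ht1 : t = 1 := tmul_one (n := n) (by omega) (by omega) (by omega)
          have hj : j = q + (n : ℤ) := by rw [ht, ht1]; ring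
          rw [hj, hgqn, hfqn]
          omega
        · rw [gmid j hr1 hr2]
          have := fneqv j hr1
          omega
    have E1' : invAt n g.toFun p = invAt n f.toFun p := by
      unfold invAt
      apply congrArg Finset.card
      apply Finset.filter_congr
      intro j hj
      simp only [Finset.mem_Icc] at hj
      rw [hgp, hp]
      exact key1' j hj.1 hj.2
    have E2' : invAt n f.toFun q = invAt n g.toFun q + 1 := by
      unfold invAt
      have hset : (Finset.Icc (q + 1) (q + (n : ℤ))).filter (fun j => f.toFun j < f.toFun q)
          = insert p ((Finset.Icc (q + 1) (q + (n : ℤ))).filter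
              (fun j => g.toFun j < g.toFun q)) := by
        ext j
        simp only [Finset.mem_insert, Finset.mem_filter, Finset.mem_Icc]
        rw [hgq, hq]
        constructor
        · rintro ⟨⟨h1, h2⟩, h3⟩
          by_cases hjp : j = p
          · exact Or.inl hjp
          · exact Or.inr ⟨⟨h1, h2⟩, (key2' j h1 h2 hjp).2 h3⟩
        · rintro (hjp | ⟨⟨h1, h2⟩, h3⟩)
          · subst hjp
            exact ⟨⟨by omega, by omega⟩, by rw [hp]; omega⟩
          · have hjp : j ≠ p := by intro h; subst h; rw [hgp] at h3; omega
            exact ⟨⟨h1, h2⟩, (key2' j h1 h2 hjp).1 h3⟩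
      rw [hset, Finset.card_insert_of_notMem]
      simp only [Finset.mem_filter, Finset.mem_Icc, hgp, hgq]
      omega
    have hq_mem : q ∈ Finset.Icc (q - 1 + 1) (q - 1 + (n : ℤ)) := by
      simp only [Finset.mem_Icc]; omega
    have hp_mem : p ∈ Finset.Icc (q - 1 + 1) (q - 1 + (n : ℤ)) := by
      simp only [Finset.mem_Icc]; omega
    have hmid_res : ∀ i ∈ ((Finset.Icc (q - 1 + 1) (q - 1 + (n : ℤ))).erase p).erase q,
        i % (n : ℤ) ≠ p % (n : ℤ) ∧ i % (n : ℤ) ≠ q % (n : ℤ) := by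
      intro i hi
      simp only [Finset.mem_erase, Finset.mem_Icc] at hi
      obtain ⟨hi1, hi2, hi3, hi4⟩ := hi
      constructor
      · intro h; have := close_eq h (by omega) (by omega); omega
      · intro h; have := close_eq h (by omega) (by omega); omega
    have hsum_f : invSum n f.toFun = invAt n f.toFun p + invAt n f.toFun q +
        ∑ i ∈ ((Finset.Icc (q - 1 + 1) (q - 1 + (n : ℤ))).erase p).erase q,
          invAt n f.toFun i := by
      rw [invSum_window f (q - 1)]
      exact sum_split2 hp_mem hq_mem hpq
    have hsum_g : invSum n g.toFun = invAt n g.toFun p + invAt n g.toFun q +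
        ∑ i ∈ ((Finset.Icc (q - 1 + 1) (q - 1 + (n : ℤ))).erase p).erase q,
          invAt n f.toFun i := by
      rw [invSum_window g (q - 1), sum_split2 hp_mem hq_mem hpq]
      congr 1
      apply Finset.sum_congr rfl
      intro i hi
      obtain ⟨h1, h2⟩ := hmid_res i hi
      exact hinv_mid i h1 h2
    rw [hsum_f, hsum_g, E1', E2'] at hlt
    omega

lemma local_main (h : f.Covers g) :
    invSum n g.toFun = invSum n f.toFun + 1 ∧
      (g.fixCount = f.fixCount ∨ g.fixCount = f.fixCount + 1) := by
  obtain ⟨hlen, w, hcase⟩ := h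
  have hlt : invSum n f.toFun < invSum n g.toFun := by
    rw [invSum_eq_length f, invSum_eq_length g]; exact hlen
  have hn2 : 2 ≤ n := by
    by_contra hn
    interval_cases n
    · -- n = 0
      have h0 : ∀ e : BoundedAffinePerm k 0, e.length = 0 := by
        intro e
        unfold BoundedAffinePerm.length
        rw [show Finset.Icc (1 : ℤ) ((0 : ℕ) : ℤ) = ∅ from Finset.Icc_eq_empty (by norm_num)]
        simp
      rw [h0 f, h0 g] at hlen
      omega
    · -- n = 1
      have hIcc : Finset.Icc (1 : ℤ) ((1 : ℕ) : ℤ) = {1} := by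
        norm_num
      have hsf := f.sum_eq
      have hsg := g.sum_eq
      rw [hIcc, Finset.sum_singleton] at hsf hsg
      have hs : ∀ m : ℤ, sigmaT 1 w m = m + 1 := by
        intro m
        unfold sigmaT
        rw [if_pos (by simp [Int.emod_one])]
      have hg1 : g.toFun 1 = f.toFun 1 + 1 := by
        rcases hcase with hc | hc
        · have := congrFun hc 1
          simp only [Function.comp_apply] at this
          rw [this, hs]
        · have := congrFun hc 1
          simp only [Function.comp_apply] at this
          rw [this, hs]
          have hper := f.periodic 1
          norm_num at hper
          rw [show (1 : ℤ) + 1 = 1 + ((1 : ℕ) : ℤ) from by norm_num]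
          rw [f.periodic 1]
          norm_num
      norm_num at hsf hsg
      omega
  rcases hcase with hc | hc
  · exact left_case f g hn2 w (fun m => congrFun hc m) hlt
  · exact right_case f g hn2 w (fun m => congrFun hc m) hlt

end Local

end St7

open St7 in
theorem statement7 {k n : ℕ} (f g : BoundedAffinePerm k n) (h : f.Covers g) :
    Xor'
      (f.crossings = g.crossings + 1 ∧ f.fixCount = g.fixCount)
      (f.crossings = g.crossings ∧ g.fixCount = f.fixCount + 1) := by
  have hid_f := St7.key_identity f
  have hid_g := St7.key_identity g
  obtain ⟨hinv, hfix⟩ := St7.local_main f g h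
  have hinv' : (invSum n g.toFun : ℤ) = (invSum n f.toFun : ℤ) + 1 := by exact_mod_cast hinv
  simp only [Xor']
  rcases hfix with hfx | hfx
  · have hfx' : (g.fixCount : ℤ) = (f.fixCount : ℤ) := by exact_mod_cast hfx
    have hcr : (f.crossings : ℤ) = (g.crossings : ℤ) + 1 := by omega
    have hcrn : f.crossings = g.crossings + 1 := by exact_mod_cast hcr
    exact Or.inl ⟨⟨hcrn, hfx.symm⟩, fun hr => by omega⟩
  · have hfx' : (g.fixCount : ℤ) = (f.fixCount : ℤ) + 1 := by exact_mod_cast hfx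
    have hcr : (f.crossings : ℤ) = (g.crossings : ℤ) := by omega
    have hcrn : f.crossings = g.crossings := by exact_mod_cast hcr
    exact Or.inr ⟨⟨hcrn, hfx⟩, fun hr => by omega⟩
end

section
/- Let M be a k×n complex matrix of rank k. Then f_M : ℤ → ℤ is a bijection. -/
noncomputable section

/-- The `n`-periodic extension of the columns of a `k × n` complex matrix `M`:
`colext M i = M_i` for `1 ≤ i ≤ n` and `colext M (i + n) = colext M i`. -/
def colext {k n : ℕ} (M : Matrix (Fin k) (Fin n) ℂ) (i : ℤ) : Fin k → ℂ :=
  if h : 0 < n then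
    fun r => M r ⟨((i - 1) % (n : ℤ)).toNat, by
      have h0 : (0 : ℤ) < (n : ℤ) := by exact_mod_cast h
      have h1 : 0 ≤ (i - 1) % (n : ℤ) := Int.emod_nonneg _ (by omega)
      have h2 : (i - 1) % (n : ℤ) < (n : ℤ) := Int.emod_lt_of_pos _ h0
      omega⟩
  else 0

/-- `f_M(i) = min { j ≥ i | M_i ∈ span(M_{i+1}, …, M_j) }`, where the columns of `M`
are extended `n`-periodically. -/
def fM {k n : ℕ} (M : Matrix (Fin k) (Fin n) ℂ) (i : ℤ) : ℤ :=
  sInf {j : ℤ | i ≤ j ∧ colext M i ∈ Submodule.span ℂ (colext M '' Set.Ioc i j)}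

end

namespace FMaux

variable {k n : ℕ} (M : Matrix (Fin k) (Fin n) ℂ)

lemma colext_add_nat (i : ℤ) : colext M (i + n) = colext M i := by
  unfold colext
  split
  · funext r
    congr 2
    have : i + (n : ℤ) - 1 = (i - 1) + (n : ℤ) * 1 := by ring
    rw [this, Int.add_mul_emod_self_left]
  · rfl

/-- The defining set. -/
def S (i : ℤ) : Set ℤ :=
  {j : ℤ | i ≤ j ∧ colext M i ∈ Submodule.span ℂ (colext M '' Set.Ioc i j)}

lemma fM_eq (i : ℤ) : fM M i = sInf (S M i) := rfl

lemma bddBelow_S (i : ℤ) : BddBelow (S M i) := ⟨i, fun _ hj => hj.1⟩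

lemma mem_S_add (hn : 0 < n) (i : ℤ) : i + n ∈ S M i := by
  refine ⟨by omega, Submodule.subset_span ?_⟩
  exact ⟨i + n, ⟨by omega, le_refl _⟩, colext_add_nat M i⟩

lemma nonempty_S (hn : 0 < n) (i : ℤ) : (S M i).Nonempty := ⟨i + n, mem_S_add M hn i⟩

lemma fM_mem (hn : 0 < n) (i : ℤ) : fM M i ∈ S M i :=
  Int.csInf_mem (nonempty_S M hn i) (bddBelow_S M i)

lemma le_fM (hn : 0 < n) (i : ℤ) : i ≤ fM M i := (fM_mem M hn i).1

lemma fM_le (i : ℤ) (j : ℤ) (hj : j ∈ S M i) : fM M i ≤ j :=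
  csInf_le (bddBelow_S M i) hj

lemma fM_spec (hn : 0 < n) (i : ℤ) :
    colext M i ∈ Submodule.span ℂ (colext M '' Set.Ioc i (fM M i)) :=
  (fM_mem M hn i).2

lemma not_mem_of_lt_fM (i j : ℤ) (hij : i ≤ j) (hj : j < fM M i) :
    colext M i ∉ Submodule.span ℂ (colext M '' Set.Ioc i j) := by
  intro h
  exact absurd (fM_le M i j ⟨hij, h⟩) (by omega)

lemma image_Ioc_shift (i j : ℤ) :
    colext M '' Set.Ioc (i + n) (j + n) = colext M '' Set.Ioc i j := by
  rw [← Set.image_add_const_Ioc (n : ℤ) i j, Set.image_image]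
  exact Set.image_congr fun x _ => colext_add_nat M x

lemma fM_add_nat (i : ℤ) : fM M (i + n) = fM M i + n := by
  rcases Nat.eq_zero_or_pos n with h0 | hn
  · simp [h0]
  have hS : ∀ j : ℤ, j ∈ S M (i + n) ↔ j - n ∈ S M i := by
    intro j
    have hj : j = (j - n) + n := by ring
    constructor
    · rintro ⟨h1, h2⟩
      refine ⟨by omega, ?_⟩
      rwa [colext_add_nat M i, hj, image_Ioc_shift] at h2
    · rintro ⟨h1, h2⟩
      refine ⟨by omega, ?_⟩
      rw [colext_add_nat M i, hj, image_Ioc_shift]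
      exact h2
  apply le_antisymm
  · exact fM_le M _ _ ((hS (fM M i + n)).2 (by simpa using fM_mem M hn i))
  · have := fM_le M i _ ((hS (fM M (i + n))).1 (fM_mem M hn (i + n)))
    omega

lemma fM_add_mul (i t : ℤ) : fM M (i + t * n) = fM M i + t * n := by
  induction t using Int.induction_on with
  | zero => simp
  | succ t ih =>
      have : i + (t + 1) * n = (i + t * n) + n := by ring
      rw [this, fM_add_nat M (i + t * n), ih]; ring
  | pred t ih =>
      have h := fM_add_nat M (i + (-t - 1) * n)
      have : i + (-t - 1) * n + n = i + (-t : ℤ) * n := by ring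
      rw [this, ih] at h
      omega

lemma Ioc_eq_insert (a j : ℤ) (h : a < j) :
    Set.Ioc a j = insert j (Set.Ioc a (j - 1)) := by
  ext x; simp only [Set.mem_Ioc, Set.mem_insert_iff]; omega

lemma fM_lt_of_lt {a b : ℤ} (hn : 0 < n) (h : a < b) (hab : fM M a = fM M b) : False := by
  set j := fM M b with hj
  have hbj : b ≤ j := le_fM M hn b
  rcases eq_or_lt_of_le hbj with hb | hb
  · -- j = b : colext M b = 0
    have hz : colext M b = 0 := by
      have := fM_spec M hn b
      rw [← hj, ← hb] at this
      simpa using this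
    have hmem : colext M a ∈ Submodule.span ℂ (colext M '' Set.Ioc a (b - 1)) := by
      have h2 := fM_spec M hn a
      rw [hab, Ioc_eq_insert a j (by omega), Set.image_insert_eq, ← hb, hz,
        Submodule.span_insert_zero] at h2
      exact h2
    exact not_mem_of_lt_fM M a (b - 1) (by omega) (by omega) hmem
  · -- b < j
    set A := colext M '' Set.Ioc a (j - 1)
    set B := colext M '' Set.Ioc b (j - 1)
    set v := colext M j
    have h1 : colext M a ∈ Submodule.span ℂ (insert v A) := by
      have h2 := fM_spec M hn a
      rwa [hab, Ioc_eq_insert a j (by omega), Set.image_insert_eq] at h2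
    have h2 : colext M a ∉ Submodule.span ℂ A :=
      not_mem_of_lt_fM M a (j - 1) (by omega) (by omega)
    have h3 : colext M b ∈ Submodule.span ℂ (insert v B) := by
      have h4 := fM_spec M hn b
      rwa [← hj, Ioc_eq_insert b j hb, Set.image_insert_eq] at h4
    have h4 : colext M b ∉ Submodule.span ℂ B :=
      not_mem_of_lt_fM M b (j - 1) (by omega) (by omega)
    have h5 : v ∈ Submodule.span ℂ (insert (colext M b) B) :=
      mem_span_insert_exchange h3 h4
    have h6 : insert (colext M b) B ⊆ A := by
      rintro x (rfl | hx)
      · exact ⟨b, ⟨h, by omega⟩, rfl⟩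
      · exact Set.image_mono (Set.Ioc_subset_Ioc_left h.le) hx
    have h7 : v ∈ Submodule.span ℂ A := Submodule.span_mono h6 h5
    rw [Submodule.span_insert_eq_span h7] at h1
    exact h2 h1

lemma fM_injective : Function.Injective (fM M) := by
  rcases Nat.eq_zero_or_pos n with h0 | hn
  · have : ∀ i, fM M i = i := by
      intro i
      have : S M i = Set.Ici i := by
        ext j
        simp only [S, Set.mem_setOf_eq, Set.mem_Ici, and_iff_left_iff_imp]
        intro _
        have : colext M i = 0 := by simp [colext, h0]
        rw [this]; exact Submodule.zero_mem _
      rw [fM_eq, this, csInf_Ici]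
    intro a b hab
    rwa [this, this] at hab
  intro a b hab
  rcases lt_trichotomy a b with h | h | h
  · exact absurd hab (fun hab => fM_lt_of_lt M hn h hab)
  · exact h
  · exact absurd hab (fun hab => fM_lt_of_lt M hn h hab.symm)

end FMaux

namespace FMaux

variable {k n : ℕ} (M : Matrix (Fin k) (Fin n) ℂ)

lemma fM_surjective : Function.Surjective (fM M) := by
  rcases Nat.eq_zero_or_pos n with h0 | hn
  · intro m
    refine ⟨m, ?_⟩
    have : S M m = Set.Ici m := by
      ext j
      simp only [S, Set.mem_setOf_eq, Set.mem_Ici, and_iff_left_iff_imp]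
      intro _
      have : colext M m = 0 := by simp [colext, h0]
      rw [this]; exact Submodule.zero_mem _
    rw [fM_eq, this, csInf_Ici]
  intro m
  haveI : NeZero n := ⟨hn.ne'⟩
  set F : Finset ℤ := Finset.Ico (m - n) m with hF
  have hcard : F.card = n := by
    rw [hF, Int.card_Ico]
    omega
  set g : ℤ → ZMod n := fun i => ((fM M i : ℤ) : ZMod n) with hg
  have hinj : Set.InjOn g F := by
    intro i hi i' hi' hgg
    simp only [hF, Finset.coe_Ico, Set.mem_Ico] at hi hi'
    have hdvd : (n : ℤ) ∣ fM M i' - fM M i := by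
      rw [← ZMod.intCast_zmod_eq_zero_iff_dvd]
      push_cast
      rw [sub_eq_zero]
      exact (hgg).symm
    obtain ⟨t, ht⟩ := hdvd
    have hEq : fM M (i + t * n) = fM M i' := by
      rw [fM_add_mul, mul_comm t (n : ℤ)]
      omega
    have hii : i' = i + t * n := (fM_injective M hEq).symm
    have hn' : (0 : ℤ) < n := by exact_mod_cast hn
    have ht0 : t = 0 := by
      rcases lt_trichotomy t 0 with h | h | h
      · nlinarith
      · exact h
      · nlinarith
    rw [hii, ht0]
    ring
  have himage : F.image g = Finset.univ := by
    apply Finset.eq_univ_of_card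
    rw [Finset.card_image_of_injOn hinj, hcard, ZMod.card]
  have hm : (m : ZMod n) ∈ F.image g := by rw [himage]; exact Finset.mem_univ _
  obtain ⟨i, _, hgi⟩ := Finset.mem_image.1 hm
  have hdvd : (n : ℤ) ∣ m - fM M i := by
    rw [← ZMod.intCast_zmod_eq_zero_iff_dvd]
    push_cast
    rw [sub_eq_zero, ← hgi]
  obtain ⟨t, ht⟩ := hdvd
  refine ⟨i + t * n, ?_⟩
  rw [fM_add_mul, mul_comm t (n : ℤ)]
  omega

end FMaux

theorem statement14 {k n : ℕ} (M : Matrix (Fin k) (Fin n) ℂ) (hM : M.rank = k) :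
    Function.Bijective (fM M) :=
  ⟨FMaux.fM_injective M, FMaux.fM_surjective M⟩
end

section
/- Let M be a k×n complex matrix of rank k. Then Σ_{i=1}^n (f_M(i) − i) = nk. Consequently (combined with the bounds i ≤ f_M(i) ≤ i+n, the periodicity f_M(i+n) = f_M(i)+n, and bijectivity of f_M) the map f_M is a k-bounded affine permutation of size n, i.e. f_M ∈ Bound(k,n). -/
open Submodule Set Module
section Aux

open scoped Classical

variable {k n : ℕ} (M : Matrix (Fin k) (Fin n) ℂ)

lemma colext_congr (hn : 0 < n) {i j : ℤ} (h : (i - 1) % (n : ℤ) = (j - 1) % (n : ℤ)) :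
    colext M i = colext M j := by
  unfold colext
  rw [dif_pos hn, dif_pos hn]
  funext r
  congr 1
  exact Fin.ext (by simp [h])

lemma colext_periodic (hn : 0 < n) (i : ℤ) : colext M (i + (n : ℤ)) = colext M i := by
  apply colext_congr M hn
  have : i + (n : ℤ) - 1 = (i - 1) + 1 * (n : ℤ) := by ring
  rw [this, Int.add_mul_emod_self_right]

lemma colext_image_shift (hn : 0 < n) (i j : ℤ) :
    colext M '' Set.Ioc (i + (n : ℤ)) (j + (n : ℤ)) = colext M '' Set.Ioc i j := by
  have h1 : Set.Ioc (i + (n : ℤ)) (j + (n : ℤ)) = (fun x => x + (n : ℤ)) '' Set.Ioc i j := by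
    ext x
    simp only [Set.mem_image, Set.mem_Ioc]
    constructor
    · intro hx; exact ⟨x - n, by omega, by ring⟩
    · rintro ⟨y, hy, rfl⟩; omega
  rw [h1, Set.image_image]
  apply Set.image_congr
  intro x _
  exact colext_periodic M hn x

end Aux
section Aux2

open scoped Classical
open Submodule Module Matrix

variable {k n : ℕ} (M : Matrix (Fin k) (Fin n) ℂ)

lemma span_Ioc_mono {i j j' : ℤ} (h : j ≤ j') :
    span ℂ (colext M '' Set.Ioc i j) ≤ span ℂ (colext M '' Set.Ioc i j') :=
  span_mono (Set.image_mono (Set.Ioc_subset_Ioc_right h))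

lemma colext_mem_range (hn : 0 < n) (i : ℤ) : colext M i ∈ Set.range Mᵀ := by
  unfold colext
  rw [dif_pos hn]
  exact ⟨_, rfl⟩

lemma span_window (hn : 0 < n) (i : ℤ) :
    span ℂ (colext M '' Set.Ioc i (i + (n : ℤ))) = span ℂ (Set.range Mᵀ) := by
  apply le_antisymm
  · apply span_le.2
    rintro _ ⟨x, _, rfl⟩
    exact subset_span (colext_mem_range M hn x)
  · apply span_le.2
    rintro _ ⟨c, rfl⟩
    apply subset_span
    have h0 : (0 : ℤ) < (n : ℤ) := by exact_mod_cast hn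
    refine ⟨i + 1 + (((c : ℤ) - i) % (n : ℤ)), ?_, ?_⟩
    · have h1 : 0 ≤ ((c : ℤ) - i) % (n : ℤ) := Int.emod_nonneg _ (by omega)
      have h2 : ((c : ℤ) - i) % (n : ℤ) < (n : ℤ) := Int.emod_lt_of_pos _ h0
      constructor <;> omega
    · unfold colext
      rw [dif_pos hn]
      funext r
      congr 1
      apply Fin.ext
      have h1 : 0 ≤ ((c : ℤ) - i) % (n : ℤ) := Int.emod_nonneg _ (by omega)
      have : (i + 1 + ((c : ℤ) - i) % (n : ℤ) - 1) % (n : ℤ) = (c : ℤ) := by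
        have e1 : i + 1 + ((c : ℤ) - i) % (n : ℤ) - 1 = i + ((c : ℤ) - i) % (n : ℤ) := by ring
        rw [e1, Int.add_emod, Int.emod_emod_of_dvd _ dvd_rfl, ← Int.add_emod]
        have e2 : i + ((c : ℤ) - i) = (c : ℤ) := by ring
        rw [e2, Int.emod_eq_of_lt (by positivity) (by exact_mod_cast c.2)]
      simp [this]
  
lemma span_window_top (hM : M.rank = k) (hn : 0 < n) (i : ℤ) :
    span ℂ (colext M '' Set.Ioc i (i + (n : ℤ))) = ⊤ := by
  rw [span_window M hn i]
  apply Submodule.eq_top_of_finrank_eq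
  change finrank ℂ (span ℂ (Set.range M.col)) = _
  rw [← Matrix.rank_eq_finrank_span_cols, hM, Module.finrank_fintype_fun_eq_card,
    Fintype.card_fin]

end Aux2
section Aux3

open scoped Classical
open Submodule Module

variable {k n : ℕ} {M : Matrix (Fin k) (Fin n) ℂ}

def fmset (M : Matrix (Fin k) (Fin n) ℂ) (i : ℤ) : Set ℤ :=
  {j : ℤ | i ≤ j ∧ colext M i ∈ Submodule.span ℂ (colext M '' Set.Ioc i j)}

lemma fmset_bddBelow (i : ℤ) : BddBelow (fmset M i) := ⟨i, fun _ h => h.1⟩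

lemma fmset_nonempty (hM : M.rank = k) (hn : 0 < n) (i : ℤ) : (fmset M i).Nonempty :=
  ⟨i + n, by omega, by rw [span_window_top M hM hn i]; trivial⟩

lemma fM_eq_sInf (i : ℤ) : fM M i = sInf (fmset M i) := rfl

lemma fM_mem (hM : M.rank = k) (hn : 0 < n) (i : ℤ) : fM M i ∈ fmset M i :=
  Int.csInf_mem (fmset_nonempty hM hn i) (fmset_bddBelow i)

lemma le_fM (hM : M.rank = k) (hn : 0 < n) (i : ℤ) : i ≤ fM M i := (fM_mem hM hn i).1

lemma fM_spanmem (hM : M.rank = k) (hn : 0 < n) (i : ℤ) :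
    colext M i ∈ span ℂ (colext M '' Set.Ioc i (fM M i)) := (fM_mem hM hn i).2

lemma fM_le {i l : ℤ} (h1 : i ≤ l) (h2 : colext M i ∈ span ℂ (colext M '' Set.Ioc i l)) :
    fM M i ≤ l := csInf_le (fmset_bddBelow i) ⟨h1, h2⟩

lemma fM_le_add (hM : M.rank = k) (hn : 0 < n) (i : ℤ) : fM M i ≤ i + n :=
  fM_le (by omega) (by rw [span_window_top M hM hn i]; trivial)

lemma fM_min {i l : ℤ} (h1 : i ≤ l) (h2 : l < fM M i) :
    colext M i ∉ span ℂ (colext M '' Set.Ioc i l) :=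
  fun h => absurd (fM_le h1 h) (by omega)

/-- characterization: for `i ≤ t`, `t < fM M i ↔ colext M i ∉ span (colext '' Ioc i t)`. -/
lemma fM_gt_iff (hM : M.rank = k) (hn : 0 < n) {i t : ℤ} (h : i ≤ t) :
    t < fM M i ↔ colext M i ∉ span ℂ (colext M '' Set.Ioc i t) := by
  constructor
  · exact fun hlt => fM_min h hlt
  · intro hns
    by_contra hle
    push_neg at hle
    exact hns (span_Ioc_mono M hle (fM_spanmem hM hn i))

lemma fM_periodic (hM : M.rank = k) (hn : 0 < n) (i : ℤ) :
    fM M (i + (n : ℤ)) = fM M i + (n : ℤ) := by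
  apply le_antisymm
  · apply fM_le (by have := le_fM hM hn i; omega)
    rw [colext_periodic M hn i, colext_image_shift M hn]
    exact fM_spanmem hM hn i
  · have h1 := le_fM hM hn (i + (n:ℤ))
    have h2 := fM_spanmem hM hn (i + (n:ℤ))
    have key : fM M i ≤ fM M (i + (n:ℤ)) - (n:ℤ) := by
      apply fM_le (by omega)
      have e : Set.Ioc (i + (n:ℤ)) (fM M (i + (n:ℤ))) =
          Set.Ioc (i + (n:ℤ)) ((fM M (i + (n:ℤ)) - (n:ℤ)) + (n:ℤ)) := by
        ring_nf
      rw [e, colext_image_shift M hn, colext_periodic M hn i] at h2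
      exact h2
    omega

end Aux3
section Aux4

open scoped Classical
open Submodule Module

variable {k n : ℕ} {M : Matrix (Fin k) (Fin n) ℂ}

lemma Ioc_insert_top {a b : ℤ} (h : a < b) :
    Set.Ioc a b = insert b (Set.Ioc a (b - 1)) := by
  ext x; simp only [Set.mem_Ioc, Set.mem_insert_iff]; omega

lemma Ioc_insert_bot {a b : ℤ} (h : a ≤ b) :
    Set.Ioc (a - 1) b = insert a (Set.Ioc a b) := by
  ext x; simp only [Set.mem_Ioc, Set.mem_insert_iff]; omega

lemma fM_injective (hM : M.rank = k) (hn : 0 < n) : Function.Injective (fM M) := by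
  intro i j hij
  by_contra hne
  wlog hlt : i < j generalizing i j
  · exact this hij.symm (Ne.symm hne) (by omega)
  set m := fM M j with hm
  have hjm : j ≤ m := le_fM hM hn j
  have him : i < m := by omega
  have hsj : colext M j ∈ span ℂ (colext M '' Set.Ioc j m) := fM_spanmem hM hn j
  have key : colext M m ∈ span ℂ (colext M '' Set.Ioc i (m - 1)) := by
    rcases eq_or_lt_of_le hjm with heq | hlt2
    · -- m = j : colext j = 0
      rw [← heq] at hsj
      simp only [Set.Ioc_self, Set.image_empty, span_empty, mem_bot] at hsj
      rw [← heq, hsj]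
      exact zero_mem _
    · -- j < m
      rw [Ioc_insert_top hlt2, Set.image_insert_eq] at hsj
      have hns : colext M j ∉ span ℂ (colext M '' Set.Ioc j (m - 1)) :=
        fM_min (by omega) (by omega)
      have hex := mem_span_insert_exchange hsj hns
      have hsub : span ℂ (insert (colext M j) (colext M '' Set.Ioc j (m - 1)))
          ≤ span ℂ (colext M '' Set.Ioc i (m - 1)) := by
        apply span_le.2
        apply Set.insert_subset_iff.2
        refine ⟨subset_span ⟨j, ⟨by omega, by omega⟩, rfl⟩, ?_⟩
        refine (Set.image_mono ?_).trans subset_span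
        intro x hx; simp only [Set.mem_Ioc] at hx ⊢; omega
      exact hsub hex
  have hsi : colext M i ∈ span ℂ (colext M '' Set.Ioc i m) := hij ▸ fM_spanmem hM hn i
  rw [Ioc_insert_top him, Set.image_insert_eq, span_insert_eq_span key] at hsi
  exact fM_min (i := i) (by omega) (by omega) hsi

lemma fM_surjective (hM : M.rank = k) (hn : 0 < n) : Function.Surjective (fM M) := by
  intro m
  set T : Set ℤ := {l : ℤ | l ≤ m ∧ colext M m ∈ span ℂ (colext M '' Set.Ioc (l - 1) (m - 1))}
    with hT
  have hne : T.Nonempty := by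
    refine ⟨m - n, by omega, ?_⟩
    have e : Set.Ioc (m - (n:ℤ) - 1) (m - 1) = Set.Ioc (m - (n:ℤ) - 1) ((m - (n:ℤ) - 1) + (n:ℤ)) := by
      ring_nf
    rw [e, span_window_top M hM hn]
    trivial
  have hbdd : BddAbove T := ⟨m, fun x hx => hx.1⟩
  set i := sSup T with hi
  have hiT : i ∈ T := Int.csSup_mem hne hbdd
  have him : i ≤ m := hiT.1
  rcases eq_or_lt_of_le him with heq | hlt
  · -- i = m : colext m = 0, fM m = m
    refine ⟨m, le_antisymm (fM_le le_rfl ?_) (le_fM hM hn m)⟩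
    have := hiT.2
    rw [heq] at this
    simp only [show Set.Ioc (m - 1) (m - 1) = (∅ : Set ℤ) from Set.Ioc_self _,
      Set.image_empty, span_empty, mem_bot] at this
    rw [this]
    exact zero_mem _
  · have hnotT : i + 1 ∉ T := fun h => absurd (le_csSup hbdd h) (by omega)
    have hns : colext M m ∉ span ℂ (colext M '' Set.Ioc i (m - 1)) := by
      intro h
      refine hnotT ⟨by omega, ?_⟩
      simpa using h
    have hmem : colext M m ∈ span ℂ (colext M '' Set.Ioc (i - 1) (m - 1)) := hiT.2
    rw [Ioc_insert_bot (a := i) (b := m - 1) (by omega), Set.image_insert_eq] at hmem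
    have hex := mem_span_insert_exchange hmem hns
    have hmem2 : colext M i ∈ span ℂ (colext M '' Set.Ioc i m) := by
      rw [Ioc_insert_top hlt, Set.image_insert_eq]
      exact hex
    refine ⟨i, le_antisymm (fM_le (by omega) hmem2) ?_⟩
    by_contra hfi
    push_neg at hfi
    have hli := le_fM hM hn i
    have hsp : colext M i ∈ span ℂ (colext M '' Set.Ioc i (m - 1)) :=
      span_Ioc_mono M (by omega) (fM_spanmem hM hn i)
    apply hns
    rw [span_insert_eq_span hsp] at hmem
    exact hmem

end Aux4
section Aux5

open scoped Classical
open Submodule Module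

variable {k n : ℕ} {M : Matrix (Fin k) (Fin n) ℂ}

lemma finrank_span_insert {v : Fin k → ℂ} {s : Set (Fin k → ℂ)} (h : v ∉ span ℂ s) :
    finrank ℂ (span ℂ (insert v s)) = finrank ℂ (span ℂ s) + 1 := by
  rw [span_insert]
  have hv : v ≠ 0 := fun h0 => h (h0 ▸ zero_mem _)
  have hinf : (ℂ ∙ v) ⊓ span ℂ s = ⊥ := by
    rw [eq_bot_iff]
    rintro x hx
    rw [Submodule.mem_inf] at hx
    obtain ⟨a, rfl⟩ := Submodule.mem_span_singleton.1 hx.1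
    rcases eq_or_ne a 0 with rfl | ha
    · simp
    · exact absurd (smul_mem _ a⁻¹ hx.2) (by rwa [inv_smul_smul₀ ha])
  have h2 := Submodule.finrank_sup_add_finrank_inf_eq (ℂ ∙ v) (span ℂ s)
  rw [hinf, finrank_bot, add_zero, finrank_span_singleton hv] at h2
  omega

lemma count_window (t : ℤ) : ∀ d : ℕ,
    ((Finset.Ioc (t - (d : ℤ)) t).filter
      (fun i => colext M i ∉ span ℂ (colext M '' Set.Ioc i t))).card
    = finrank ℂ (span ℂ (colext M '' Set.Ioc (t - (d : ℤ)) t)) := by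
  intro d
  induction d with
  | zero =>
    have e : t - ((0 : ℕ) : ℤ) = t := by norm_num
    rw [e, Set.Ioc_self, Finset.Ioc_self, Set.image_empty, Submodule.span_empty,
      Finset.filter_empty, Finset.card_empty, finrank_bot]
  | succ d ih =>
    set b := t - (d : ℤ) with hb
    have hcast : t - ((d + 1 : ℕ) : ℤ) = b - 1 := by push_cast; ring
    have hbt : b ≤ t := by omega
    have hfin : Finset.Ioc (b - 1) t = insert b (Finset.Ioc b t) := by
      ext x
      simp only [Finset.mem_Ioc, Finset.mem_insert]
      omega
    have hset : Set.Ioc (b - 1) t = insert b (Set.Ioc b t) := Ioc_insert_bot hbt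
    rw [hcast, hfin, hset, Finset.filter_insert]
    by_cases hP : colext M b ∈ span ℂ (colext M '' Set.Ioc b t)
    · rw [if_neg (by simpa using hP), Set.image_insert_eq, span_insert_eq_span hP]
      exact ih
    · rw [if_pos hP, Set.image_insert_eq, finrank_span_insert hP,
        Finset.card_insert_of_notMem (fun hmem => by
          have := Finset.mem_of_mem_filter b hmem
          simp at this)]
      omega

lemma count_k (hM : M.rank = k) (hn : 0 < n) (t : ℤ) :
    ((Finset.Ioc (t - (n : ℤ)) t).filter (fun i => t < fM M i)).card = k := by
  have e0 : (Finset.Ioc (t - (n : ℤ)) t).filter (fun i => t < fM M i)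
      = (Finset.Ioc (t - (n : ℤ)) t).filter
        (fun i => colext M i ∉ span ℂ (colext M '' Set.Ioc i t)) :=
    Finset.filter_congr (fun i hi => by
      rw [Finset.mem_Ioc] at hi
      exact fM_gt_iff hM hn hi.2)
  rw [e0, count_window t n]
  have e : Set.Ioc (t - (n : ℤ)) t = Set.Ioc (t - (n : ℤ)) ((t - (n : ℤ)) + (n : ℤ)) := by
    ring_nf
  rw [e, span_window_top M hM hn, finrank_top, Module.finrank_fintype_fun_eq_card,
    Fintype.card_fin]

end Aux5
section Aux6

open scoped Classical
open Submodule Module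

variable {k n : ℕ} {M : Matrix (Fin k) (Fin n) ℂ}

lemma sum_fM (hM : M.rank = k) (hn : 0 < n) :
    (∑ i ∈ Finset.Icc (1 : ℤ) (n : ℤ), (fM M i - i)) = (n : ℤ) * (k : ℤ) := by
  have hper : ∀ i : ℤ, fM M (i + (n:ℤ)) = fM M i + (n:ℤ) := fM_periodic hM hn
  have hperdown : ∀ i : ℤ, fM M (i - (n:ℤ)) = fM M i - (n:ℤ) := by
    intro i
    have := hper (i - (n:ℤ))
    rw [sub_add_cancel] at this
    omega
  have hge : ∀ i, i ≤ fM M i := le_fM hM hn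
  have hle : ∀ i, fM M i ≤ i + (n:ℤ) := fM_le_add hM hn
  have hn' : (0:ℤ) < (n:ℤ) := by exact_mod_cast hn
  set A := (Finset.Icc (1:ℤ) (n:ℤ)).sigma (fun i => Finset.Ico i (fM M i)) with hA
  set B := (Finset.Icc (1:ℤ) (n:ℤ)).sigma
    (fun t => (Finset.Ioc (t - (n:ℤ)) t).filter (fun i => t < fM M i)) with hB
  have hcard : A.card = B.card := by
    apply Finset.card_nbij'
      (i := fun p => if p.2 ≤ (n:ℤ) then (⟨p.2, p.1⟩ : (_ : ℤ) × ℤ)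
        else ⟨p.2 - (n:ℤ), p.1 - (n:ℤ)⟩)
      (j := fun p => if 1 ≤ p.2 then (⟨p.2, p.1⟩ : (_ : ℤ) × ℤ)
        else ⟨p.2 + (n:ℤ), p.1 + (n:ℤ)⟩)
    · rintro ⟨i, t⟩ hp
      simp only [Finset.mem_coe, hA, hB, Finset.mem_sigma, Finset.mem_Icc, Finset.mem_Ico, Finset.mem_filter,
        Finset.mem_Ioc] at hp ⊢
      obtain ⟨⟨hi1, hi2⟩, ht1, ht2⟩ := hp
      have h1 := hle i
      split_ifs with h
      · simp only [Finset.mem_sigma, Finset.mem_Icc, Finset.mem_filter, Finset.mem_Ioc]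
        exact ⟨⟨by omega, h⟩, ⟨by omega, ht1⟩, ht2⟩
      · simp only [Finset.mem_sigma, Finset.mem_Icc, Finset.mem_filter, Finset.mem_Ioc]
        have h2 := hperdown i
        exact ⟨⟨by omega, by omega⟩, ⟨by omega, by omega⟩, by omega⟩
    · rintro ⟨t, i⟩ hp
      simp only [Finset.mem_coe, hA, hB, Finset.mem_sigma, Finset.mem_Icc, Finset.mem_filter,
        Finset.mem_Ioc] at hp ⊢
      obtain ⟨⟨ht1, ht2⟩, ⟨hi1, hi2⟩, hfi⟩ := hp
      split_ifs with h
      · simp only [Finset.mem_sigma, Finset.mem_Icc, Finset.mem_Ico]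
        exact ⟨⟨h, by omega⟩, hi2, hfi⟩
      · simp only [Finset.mem_sigma, Finset.mem_Icc, Finset.mem_Ico]
        have h2 := hper i
        exact ⟨⟨by omega, by omega⟩, by omega, by omega⟩
    · rintro ⟨i, t⟩ hp
      simp only [Finset.mem_coe, hA, Finset.mem_sigma, Finset.mem_Icc, Finset.mem_Ico] at hp
      obtain ⟨⟨hi1, hi2⟩, ht1, ht2⟩ := hp
      by_cases h : t ≤ (n:ℤ)
      · beta_reduce
        rw [if_pos h]
        simp only
        rw [if_pos (by omega)]
      · beta_reduce
        rw [if_neg h]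
        simp only
        rw [if_neg (by omega)]
        simp only [Sigma.mk.inj_iff, heq_eq_eq]
        constructor <;> ring
    · rintro ⟨t, i⟩ hp
      simp only [Finset.mem_coe, hB, Finset.mem_sigma, Finset.mem_Icc, Finset.mem_filter, Finset.mem_Ioc] at hp
      obtain ⟨⟨ht1, ht2⟩, ⟨hi1, hi2⟩, hfi⟩ := hp
      by_cases h : 1 ≤ i
      · beta_reduce
        rw [if_pos h]
        simp only
        rw [if_pos (by omega)]
      · beta_reduce
        rw [if_neg h]
        simp only
        rw [if_neg (by omega)]
        simp only [Sigma.mk.inj_iff, heq_eq_eq]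
        constructor <;> ring
  have cA : (A.card : ℤ) = ∑ i ∈ Finset.Icc (1:ℤ) (n:ℤ), (fM M i - i) := by
    rw [hA, Finset.card_sigma, Nat.cast_sum]
    apply Finset.sum_congr rfl
    intro i _
    rw [Int.card_Ico, Int.toNat_of_nonneg (by have := hge i; omega)]
  have cB : (B.card : ℤ) = (n:ℤ) * (k:ℤ) := by
    rw [hB, Finset.card_sigma]
    have : ∀ t ∈ Finset.Icc (1:ℤ) (n:ℤ),
        ((Finset.Ioc (t - (n:ℤ)) t).filter (fun i => t < fM M i)).card = k :=
      fun t _ => count_k hM hn t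
    rw [Finset.sum_congr rfl this, Finset.sum_const, Int.card_Icc]
    simp only [smul_eq_mul, Nat.cast_mul]
    have : ((n:ℤ) + 1 - 1).toNat = n := by omega
    rw [this]
  rw [← cA, hcard, cB]

end Aux6
section Final

open Submodule

lemma fM_eq_id_of_n_zero {k : ℕ} (M : Matrix (Fin k) (Fin 0) ℂ) (i : ℤ) : fM M i = i := by
  have hz : colext M i = 0 := by unfold colext; rw [dif_neg (by omega)]
  apply le_antisymm
  · exact csInf_le ⟨i, fun _ h => h.1⟩ ⟨le_rfl, by rw [hz]; exact zero_mem _⟩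
  · have := Int.csInf_mem (s := {j : ℤ | i ≤ j ∧ colext M i ∈
      Submodule.span ℂ (colext M '' Set.Ioc i j)})
      ⟨i, le_rfl, by rw [hz]; exact zero_mem _⟩ ⟨i, fun _ h => h.1⟩
    exact this.1

end Final

theorem statement15 {k n : ℕ} (M : Matrix (Fin k) (Fin n) ℂ) (hM : M.rank = k) :
    (∑ i ∈ Finset.Icc (1 : ℤ) (n : ℤ), (fM M i - i)) = (n : ℤ) * (k : ℤ) ∧
    ∃ F : BoundedAffinePerm k n, F.toFun = fM M := by
  rcases Nat.eq_zero_or_pos n with rfl | hn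
  · have hempty : Finset.Icc (1 : ℤ) ((0:ℕ) : ℤ) = ∅ := Finset.Icc_eq_empty (by norm_num)
    have hid := fM_eq_id_of_n_zero M
    refine ⟨by rw [hempty]; simp, ⟨⟨fM M, ?_, ?_, ?_, ?_, ?_⟩, rfl⟩⟩
    · exact ⟨fun a b hab => by rwa [hid, hid] at hab, fun b => ⟨b, hid b⟩⟩
    · intro i; rw [hid, hid]
    · intro i; rw [hid]
    · intro i; rw [hid]; omega
    · rw [hempty]; simp
  · exact ⟨sum_fM hM hn, ⟨⟨fM M, ⟨fM_injective hM hn, fM_surjective hM hn⟩,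
      fM_periodic hM hn, le_fM hM hn, fM_le_add hM hn, sum_fM hM hn⟩, rfl⟩⟩
end
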